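/- arXiv:1003.0349 — 7 statements merged into one kernel-verified Lean document; each statement's English description precedes it below -/
import Mathlib

section
/- For every weakly controlled Moran construction {X_i : i ∈ I*} there exist constants c > 0 and 0 < ϱ < 1 such that diam(X_i) ≤ c·ϱ^{|i|} for every i ∈ I*. -/
open Metric Set Filter MeasureTheory Topology
open scoped ENNReal ENat

namespace Moran

/-- Composition of the maps of an IFS along a finite word:
`comp φ (i₁, …, iₙ) = φ i₁ ∘ ⋯ ∘ φ iₙ`. -/
def comp {ι M : Type*} (φ : ι → M → M) : List ι → M → M
  | [] => id
  | a :: l => φ a ∘ comp φ l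

/-- The initial segment (of length `n`) of an infinite word. -/
def pre {ι : Type*} (j : ℕ → ι) (n : ℕ) : List ι := List.ofFn fun k : Fin n => j k

/-- The cylinder set of a finite word, as a subset of the symbol space `I^∞`. -/
def cylinder {ι : Type*} (i : List ι) : Set (ℕ → ι) := {j | pre j i.length = i}

/-- Two finite words are incomparable if neither is an initial segment of the other. -/
def Incomp {ι : Type*} (i j : List ι) : Prop := ¬ i <+: j ∧ ¬ j <+: i

/-- A metric space is doubling if there is `κ` such that every ball of radius `2r`
can be covered by `κ` balls of radius `r`. -/
def DoublingSpace (M : Type*) [MetricSpace M] : Prop :=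
  ∃ κ : ℕ, ∀ (x : M) (r : ℝ), ∃ s : Finset M,
    s.card ≤ κ ∧ ball x (2 * r) ⊆ ⋃ y ∈ s, ball y r

/-- A weakly controlled Moran construction (WCMC) over the index set `ι`
in the metric space `M`. The sets are indexed by nonempty finite words,
modelled as nonempty lists; `i.dropLast` plays the role of `i⁻`. -/
structure WCMC (ι M : Type*) [Fintype ι] [MetricSpace M] where
  X : List ι → Set M
  compact : ∀ i : List ι, i ≠ [] → IsCompact (X i)
  diam_pos : ∀ i : List ι, i ≠ [] → 0 < diam (X i)
  D : ℝ
  one_le_D : 1 ≤ D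
  nested : ∀ i : List ι, 2 ≤ i.length → X i ⊆ X i.dropLast
  small : ∃ n : ℕ, 1 ≤ n ∧ ∀ i : List ι, i.length = n → diam (X i) < D⁻¹
  submult : ∀ i j : List ι, i ≠ [] → j ≠ [] →
    diam (X (i ++ j)) ≤ D * diam (X i) * diam (X j)
  lower : ∀ i : List ι, 2 ≤ i.length → D⁻¹ * diam (X i.dropLast) ≤ diam (X i)

/-- A controlled Moran construction (CMC). -/
structure CMC (ι M : Type*) [Fintype ι] [MetricSpace M] where
  X : List ι → Set M
  compact : ∀ i : List ι, i ≠ [] → IsCompact (X i)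
  diam_pos : ∀ i : List ι, i ≠ [] → 0 < diam (X i)
  D : ℝ
  one_le_D : 1 ≤ D
  nested : ∀ i : List ι, 2 ≤ i.length → X i ⊆ X i.dropLast
  small : ∃ n : ℕ, 1 ≤ n ∧ ∀ i : List ι, i.length = n → diam (X i) < D⁻¹
  controlled_le : ∀ i j : List ι, i ≠ [] → j ≠ [] →
    diam (X (i ++ j)) ≤ D * (diam (X i) * diam (X j))
  controlled_ge : ∀ i j : List ι, i ≠ [] → j ≠ [] →
    D⁻¹ * (diam (X i) * diam (X j)) ≤ diam (X (i ++ j))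

/-- The limit set `E = π(I^∞)` of a Moran construction. -/
def limitSet {ι M : Type*} [MetricSpace M] (X : List ι → Set M) : Set M :=
  {x | ∃ j : ℕ → ι, ∀ n : ℕ, 1 ≤ n → x ∈ X (pre j n)}

/-- `Z(r)`: the words whose construction piece has diameter at most `r` while the
parent piece has diameter greater than `r` (first-generation words with diameter
at most `r` are included). -/
def Zr {ι M : Type*} [MetricSpace M] (X : List ι → Set M) (r : ℝ) : Set (List ι) :=
  {i | i ≠ [] ∧ diam (X i) ≤ r ∧ (i.length = 1 ∨ r < diam (X i.dropLast))}

/-- `Z(x,r)`: the words of `Z(r)` whose construction piece meets `B(x,r)`. -/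
def Zx {ι M : Type*} [MetricSpace M] (X : List ι → Set M) (x : M) (r : ℝ) :
    Set (List ι) :=
  {i | i ∈ Zr X r ∧ (X i ∩ ball x r).Nonempty}

/-- The finite clustering property: `sup_{x ∈ E} limsup_{r ↓ 0} #Z(x,r) < ∞`. -/
def FCP {ι M : Type*} [MetricSpace M] (X : List ι → Set M) : Prop :=
  ∃ K : ℕ, ∀ x ∈ limitSet X,
    Filter.limsup (fun r : ℝ => (Zx X x r).encard) (𝓝[>] 0) ≤ (K : ℕ∞)

/-- The ball condition. -/
def BallCond {ι M : Type*} [MetricSpace M] (X : List ι → Set M) : Prop :=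
  ∃ δ : ℝ, 0 < δ ∧ δ < 1 ∧ ∀ x ∈ limitSet X, ∃ rx > 0, ∀ r : ℝ, 0 < r → r < rx →
    ∃ c : List ι → M, (∀ i ∈ Zx X x r, infDist (c i) (X i) < r) ∧
      (Zx X x r).Pairwise fun i j => Disjoint (ball (c i) (δ * r)) (ball (c j) (δ * r))

/-- Distance between two subsets of a metric space. -/
noncomputable def setDist {M : Type*} [MetricSpace M] (s t : Set M) : ℝ :=
  ENNReal.toReal (⨅ x ∈ s, EMetric.infEdist x t)

/-- Tractability of a Moran construction. -/
def Tractable {ι M : Type*} [MetricSpace M] (X : List ι → Set M) : Prop :=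
  ∃ C : ℝ, 1 ≤ C ∧ ∀ r : ℝ, 0 < r → ∀ h i j : List ι, h ≠ [] →
    i ∈ Zr X r → j ∈ Zr X r → setDist (X i) (X j) ≤ r →
      setDist (X (h ++ i)) (X (h ++ j)) ≤ C * diam (X h) * r

/-- The `n`-th pressure sum `Σ_{i ∈ I^n} diam(X_i)^t`. -/
noncomputable def presSum {ι M : Type*} [Fintype ι] [MetricSpace M]
    (X : List ι → Set M) (t : ℝ) (n : ℕ) : ℝ :=
  ∑ i : Fin n → ι, diam (X (List.ofFn i)) ^ t

/-- `P` is the topological pressure of the construction `X`: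
`P(t) = lim_{n → ∞} (1/n) log Σ_{i ∈ I^n} diam(X_i)^t` for every `t ≥ 0`. -/
def IsPressure {ι M : Type*} [Fintype ι] [MetricSpace M]
    (X : List ι → Set M) (P : ℝ → ℝ) : Prop :=
  ∀ t : ℝ, 0 ≤ t →
    Tendsto (fun n : ℕ => (1 / (n : ℝ)) * Real.log (presSum X t n)) atTop (𝓝 (P t))

/-- The covering number `N(E,r)`: the minimal number of open balls of radius `r`
needed to cover `E`. -/
noncomputable def coverNum {M : Type*} [MetricSpace M] (E : Set M) (r : ℝ) : ℕ :=
  sInf {k : ℕ | ∃ s : Finset M, s.card = k ∧ E ⊆ ⋃ y ∈ s, ball y r}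

/-- The upper Minkowski dimension `limsup_{r ↓ 0} log N(E,r) / (−log r)`. -/
noncomputable def upMink {M : Type*} [MetricSpace M] (E : Set M) : EReal :=
  Filter.limsup
    (fun r : ℝ => ((Real.log (coverNum E r) / (-Real.log r) : ℝ) : EReal)) (𝓝[>] 0)

/-- The `n`-th stage `M^ψ_n(A)` of the Carathéodory construction on the symbol
space: the infimum of `Σ_{i ∈ C} ψ(i)` over covers of `A` by cylinders of words of
length at least `n`. -/
noncomputable def Mpsin {ι : Type*} (ψ : List ι → ℝ) (n : ℕ) (A : Set (ℕ → ι)) :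
    ℝ≥0∞ :=
  ⨅ (C : Set (List ι)) (_ : ∀ i ∈ C, i ≠ [] ∧ n ≤ i.length)
    (_ : A ⊆ ⋃ i ∈ C, cylinder i), ∑' i : C, ENNReal.ofReal (ψ i)

/-- `M^ψ(A) = lim_{n → ∞} M^ψ_n(A)`; since the stages are nondecreasing in `n`,
the limit equals the supremum. -/
noncomputable def Mpsi {ι : Type*} (ψ : List ι → ℝ) (A : Set (ℕ → ι)) : ℝ≥0∞ :=
  ⨆ n : ℕ, Mpsin ψ n A

/-- A semiconformal iterated function system on `M`: finitely many contractive
injections `φ i` whose invariant set `E` has positive diameter, together with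
semiconformality bounds `s̲_i, s̄_i` (comparable via `D`) for the iterated maps. -/
structure SCIFS (ι M : Type*) [Fintype ι] [MetricSpace M] where
  φ : ι → M → M
  contr : ∀ i : ι, ∃ s : ℝ, 0 ≤ s ∧ s < 1 ∧ ∀ x y : M, dist (φ i x) (φ i y) ≤ s * dist x y
  inj : ∀ i : ι, Function.Injective (φ i)
  E : Set M
  E_compact : IsCompact E
  E_nonempty : E.Nonempty
  E_invariant : E = ⋃ i : ι, φ i '' E
  diamE_pos : 0 < diam E
  slo : List ι → ℝ
  shi : List ι → ℝ
  D : ℝ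
  one_le_D : 1 ≤ D
  slo_pos : ∀ i : List ι, i ≠ [] → 0 < slo i
  slo_le_shi : ∀ i : List ι, i ≠ [] → slo i ≤ shi i
  shi_lt_one : ∀ i : List ι, i ≠ [] → shi i < 1
  shi_le_D_slo : ∀ i : List ι, i ≠ [] → shi i ≤ D * slo i
  lower : ∀ i : List ι, i ≠ [] → ∀ x y : M,
    slo i * dist x y ≤ dist (comp φ i x) (comp φ i y)
  upper : ∀ i : List ι, i ≠ [] → ∀ x y : M,
    dist (comp φ i x) (comp φ i y) ≤ shi i * dist x y

/-- The Moran construction pieces `E_i = φ_i(E)` associated with an IFS. -/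
def SCIFS.Xs {ι M : Type*} [Fintype ι] [MetricSpace M] (S : SCIFS ι M) :
    List ι → Set M := fun i => comp S.φ i '' S.E

/-- The open set condition. -/
def OSC {ι M : Type*} [Fintype ι] [MetricSpace M] (S : SCIFS ι M) : Prop :=
  ∃ U : Set M, IsOpen U ∧ U.Nonempty ∧ ∀ i j : List ι, i ≠ [] → j ≠ [] →
    Incomp i j → Disjoint (comp S.φ i '' U) (comp S.φ j '' U)

/-- The strong open set condition. -/
def SOSC {ι M : Type*} [Fintype ι] [MetricSpace M] (S : SCIFS ι M) : Prop :=
  ∃ U : Set M, IsOpen U ∧ U.Nonempty ∧ (U ∩ S.E).Nonempty ∧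
    ∀ i j : List ι, i ≠ [] → j ≠ [] →
      Incomp i j → Disjoint (comp S.φ i '' U) (comp S.φ j '' U)

/-- An essential open set for an IFS: a dense open set meeting the invariant set. -/
def EssentialOpen {ι M : Type*} [Fintype ι] [MetricSpace M] (S : SCIFS ι M)
    (W : Set M) : Prop :=
  IsOpen W ∧ Dense W ∧ (W ∩ S.E).Nonempty

/-- A properly semiconformal IFS. -/
def ProperlySC {ι M : Type*} [Fintype ι] [MetricSpace M] (S : SCIFS ι M) : Prop :=
  ∃ W : Set M, EssentialOpen S W ∧ W ≠ univ ∧ ∀ x ∈ W, ∃ lam : ℝ, 1 ≤ lam ∧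
    ∀ i : List ι, i ≠ [] →
      infDist (comp S.φ i x) (comp S.φ i '' Wᶜ) ≤
        lam * infDist (comp S.φ i x) ((comp S.φ i '' W)ᶜ)

end Moran

/-- For every weakly controlled Moran construction there exist
constants `c > 0` and `0 < ϱ < 1` with `diam(X_i) ≤ c·ϱ^{|i|}` for every `i ∈ I*`. -/
theorem stmt0 {ι M : Type*} [Fintype ι] [MetricSpace M]
    (hcard : 2 ≤ Fintype.card ι) (W : Moran.WCMC ι M) :
    ∃ c : ℝ, 0 < c ∧ ∃ ϱ : ℝ, 0 < ϱ ∧ ϱ < 1 ∧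
      ∀ i : List ι, i ≠ [] → Metric.diam (W.X i) ≤ c * ϱ ^ i.length := by
  classical
  haveI : Nonempty ι := Fintype.card_pos_iff.mp (by omega)
  obtain ⟨n, hn1, hsmall⟩ := W.small
  have hD0 : (0:ℝ) < W.D := lt_of_lt_of_le one_pos W.one_le_D
  -- monotonicity along prefixes
  have mono : ∀ (i j : List ι), i ≠ [] →
      Metric.diam (W.X (i ++ j)) ≤ Metric.diam (W.X i) := by
    intro i j hi
    induction j using List.reverseRecOn with
    | nil => simp
    | append_singleton j a ih =>
      have hilen : 1 ≤ i.length := List.length_pos_iff.mpr hi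
      have hdl : (i ++ (j ++ [a])).dropLast = i ++ j := by
        rw [← List.append_assoc]
        exact List.dropLast_concat ..
      have hsub : W.X (i ++ (j ++ [a])) ⊆ W.X (i ++ j) := by
        rw [← hdl]
        apply W.nested
        simp only [List.length_append, List.length_cons]
        omega
      have h1 : Metric.diam (W.X (i ++ (j ++ [a]))) ≤ Metric.diam (W.X (i ++ j)) :=
        Metric.diam_mono hsub ((W.compact (i ++ j) (by simp [hi])).isBounded)
      exact h1.trans ih
  -- sup of diameters over words of length n
  have hne : (Finset.univ : Finset (Fin n → ι)).Nonempty := Finset.univ_nonempty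
  set S : ℝ := Finset.univ.sup' hne (fun w => Metric.diam (W.X (List.ofFn w))) with hSdef
  have hle : ∀ i : List ι, i.length = n → Metric.diam (W.X i) ≤ S := by
    intro i hi
    have hofn : List.ofFn (fun k : Fin n => i.get (Fin.cast hi.symm k)) = i := by
      apply List.ext_getElem <;> simp [hi]
    have := Finset.le_sup' (fun w : Fin n → ι => Metric.diam (W.X (List.ofFn w)))
      (Finset.mem_univ (fun k : Fin n => i.get (Fin.cast hi.symm k)))
    rwa [hofn] at this
  have hS_lt : S < W.D⁻¹ := by
    rw [hSdef, Finset.sup'_lt_iff]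
    intro w _
    exact hsmall (List.ofFn w) (by simp)
  have hS_pos : 0 < S := by
    have w : Fin n → ι := fun _ => Classical.arbitrary ι
    have h0 : 0 < Metric.diam (W.X (List.ofFn w)) := by
      apply W.diam_pos
      intro h
      have := congrArg List.length h
      simp at this
      omega
    refine lt_of_lt_of_le h0 ?_
    exact Finset.le_sup' (fun w : Fin n → ι => Metric.diam (W.X (List.ofFn w)))
      (Finset.mem_univ w)
  have ha0 : 0 < W.D * S := mul_pos hD0 hS_pos
  have ha1 : W.D * S < 1 := by
    have := (mul_lt_mul_iff_right₀ hD0).mpr hS_lt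
    rwa [mul_inv_cancel₀ hD0.ne'] at this
  -- block estimate
  have block : ∀ q : ℕ, ∀ i : List ι, i.length = (q + 1) * n →
      Metric.diam (W.X i) ≤ S * (W.D * S) ^ q := by
    intro q
    induction q with
    | zero => intro i hi; simpa using hle i (by simpa using hi)
    | succ q ih =>
      intro i hi
      have hkle : (q + 1) * n ≤ (q + 1 + 1) * n := Nat.mul_le_mul_right _ (by omega)
      have hlen1 : (i.take ((q + 1) * n)).length = (q + 1) * n := by
        simp only [List.length_take, hi]
        omega
      have hlen2 : (i.drop ((q + 1) * n)).length = n := by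
        simp only [List.length_drop, hi]
        ring_nf
        omega
      have hne1 : i.take ((q + 1) * n) ≠ [] := by
        intro h; rw [h] at hlen1; simp at hlen1; omega
      have hne2 : i.drop ((q + 1) * n) ≠ [] := by
        intro h; rw [h] at hlen2; simp at hlen2; omega
      have hsm := W.submult _ _ hne1 hne2
      rw [List.take_append_drop] at hsm
      have h1 := ih _ hlen1
      have h2 := hle _ hlen2
      calc Metric.diam (W.X i)
          ≤ W.D * Metric.diam (W.X (i.take ((q + 1) * n))) *
            Metric.diam (W.X (i.drop ((q + 1) * n))) := hsm
        _ ≤ W.D * (S * (W.D * S) ^ q) * S := by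
            apply mul_le_mul _ h2 Metric.diam_nonneg
              (by positivity)
            exact mul_le_mul_of_nonneg_left h1 hD0.le
        _ = S * (W.D * S) ^ (q + 1) := by ring
  -- the constants
  set ϱ : ℝ := (W.D * S) ^ ((n : ℝ)⁻¹) with hϱdef
  have hϱ0 : 0 < ϱ := Real.rpow_pos_of_pos ha0 _
  have hϱ1 : ϱ < 1 := Real.rpow_lt_one ha0.le ha1 (by positivity)
  have hϱn : ϱ ^ n = W.D * S := Real.rpow_inv_natCast_pow ha0.le (by omega)
  set B : ℝ := Finset.univ.sup' Finset.univ_nonempty (fun b : ι => Metric.diam (W.X [b])) with hBdef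
  have hBle : ∀ b : ι, Metric.diam (W.X [b]) ≤ B := by
    intro b
    exact Finset.le_sup' (fun b : ι => Metric.diam (W.X [b])) (Finset.mem_univ b)
  refine ⟨max 1 B / ϱ ^ n, by positivity, ϱ, hϱ0, hϱ1, ?_⟩
  intro i hi
  set m := i.length with hm
  have hm1 : 1 ≤ m := List.length_pos_iff.mpr hi
  -- first: diam (X i) ≤ B in all cases when needed via head
  have hhead : Metric.diam (W.X i) ≤ B := by
    have hcons : i = [i.head hi] ++ i.tail := by simp
    calc Metric.diam (W.X i) = Metric.diam (W.X ([i.head hi] ++ i.tail)) := by rw [← hcons]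
      _ ≤ Metric.diam (W.X [i.head hi]) := mono _ _ (by simp)
      _ ≤ B := hBle _
  by_cases hcase : m < n
  · -- short words
    have h1 : ϱ ^ n ≤ ϱ ^ m := pow_le_pow_of_le_one hϱ0.le hϱ1.le (by omega)
    calc Metric.diam (W.X i) ≤ B := hhead
      _ ≤ max 1 B := le_max_right _ _
      _ = max 1 B / ϱ ^ n * ϱ ^ n := by field_simp
      _ ≤ max 1 B / ϱ ^ n * ϱ ^ m := by
          apply mul_le_mul_of_nonneg_left h1 (by positivity)
  · push_neg at hcase
    set q := m / n with hq
    have hq1 : 1 ≤ q := (Nat.one_le_div_iff (by omega)).mpr hcase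
    have hqn : q * n ≤ m := Nat.div_mul_le_self m n
    have hqn2 : m < q * n + n := by
      have h1 : m / n * n + m % n = m := Nat.div_add_mod' m n
      have h2 : m % n < n := Nat.mod_lt _ (by omega)
      rw [hq]
      calc m = m / n * n + m % n := h1.symm
        _ < m / n * n + n := Nat.add_lt_add_left h2 _
    have hlenp : (i.take (q * n)).length = q * n := by
      simp only [List.length_take]; omega
    have hnep : i.take (q * n) ≠ [] := by
      intro h; rw [h] at hlenp; simp at hlenp
      rcases hlenp with h | h <;> omega
    have h1 : Metric.diam (W.X i) ≤ Metric.diam (W.X (i.take (q * n))) := by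
      conv_lhs => rw [← List.take_append_drop (q * n) i]
      exact mono _ _ hnep
    have h2 : Metric.diam (W.X (i.take (q * n))) ≤ S * (W.D * S) ^ (q - 1) := by
      apply block (q - 1)
      rw [hlenp]; congr 1; omega
    have hSa : S ≤ W.D * S := le_mul_of_one_le_left hS_pos.le W.one_le_D
    have h3 : S * (W.D * S) ^ (q - 1) ≤ (W.D * S) ^ q := by
      calc S * (W.D * S) ^ (q - 1) ≤ (W.D * S) * (W.D * S) ^ (q - 1) :=
            mul_le_mul_of_nonneg_right hSa (by positivity)
        _ = (W.D * S) ^ (q - 1 + 1) := (pow_succ' _ _).symm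
        _ = (W.D * S) ^ q := by congr 1; omega
    have h4 : (W.D * S) ^ q = ϱ ^ (q * n) := by rw [pow_mul', hϱn]
    have h5 : ϱ ^ (q * n) ≤ ϱ ^ (m - n) := pow_le_pow_of_le_one hϱ0.le hϱ1.le (by omega)
    have h6 : ϱ ^ (m - n) ≤ max 1 B / ϱ ^ n * ϱ ^ m := by
      have : ϱ ^ (m - n) * ϱ ^ n = ϱ ^ m := by
        rw [← pow_add]; congr 1; omega
      rw [div_mul_eq_mul_div, le_div_iff₀ (by positivity), mul_comm (max 1 B) (ϱ ^ m),
        ← this]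
      nlinarith [pow_pos hϱ0 (m - n), pow_pos hϱ0 n, le_max_left 1 B,
        mul_pos (pow_pos hϱ0 (m-n)) (pow_pos hϱ0 n)]
    calc Metric.diam (W.X i) ≤ Metric.diam (W.X (i.take (q * n))) := h1
      _ ≤ S * (W.D * S) ^ (q - 1) := h2
      _ ≤ (W.D * S) ^ q := h3
      _ = ϱ ^ (q * n) := h4
      _ ≤ ϱ ^ (m - n) := h5
      _ ≤ max 1 B / ϱ ^ n * ϱ ^ m := h6
end

section
/- For a weakly controlled Moran construction, for every t ≥ 0 the limit P(t) = lim_{n→∞} (1/n)·log Σ_{i∈I^n} diam(X_i)^t exists and is finite, the function P : [0,∞) → ℝ is convex and satisfies P(t) ≥ P(0) − t·log D for all t ≥ 0 (where D is the WCMC constant), and there exists t ≥ 0 such that P(t) = 0. -/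
open Metric Set Filter MeasureTheory Topology
open scoped ENNReal ENat

section Stmt1Aux

namespace MoranAux

open Moran

variable {ι M : Type*} [Fintype ι] [MetricSpace M]

lemma D_pos (W : WCMC ι M) : (0:ℝ) < W.D := lt_of_lt_of_le one_pos W.one_le_D

lemma Dinv_le_one (W : WCMC ι M) : W.D⁻¹ ≤ 1 := by
  have h := D_pos W
  nlinarith [mul_inv_cancel₀ h.ne', inv_nonneg.mpr h.le, W.one_le_D]

lemma Dinv_nonneg (W : WCMC ι M) : 0 ≤ W.D⁻¹ := inv_nonneg.mpr (D_pos W).le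

lemma ofFn_ne_nil {n : ℕ} (hn : 1 ≤ n) (f : Fin n → ι) : List.ofFn f ≠ [] := by
  simp only [ne_eq, List.ofFn_eq_nil_iff]; omega

/-- Lower bound on diameters coming from (W4). -/
lemma diam_lower (W : WCMC ι M) {c : ℝ} (hc0 : 0 ≤ c) (hc : ∀ a : ι, c ≤ diam (W.X [a])) :
    ∀ i : List ι, i ≠ [] → c * W.D⁻¹ ^ i.length ≤ diam (W.X i) := by
  intro i
  induction i using List.reverseRecOn with
  | nil => intro h; exact absurd rfl h
  | append_singleton l a ih =>
    intro _
    rcases eq_or_ne l [] with rfl | hl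
    · simp only [List.nil_append, List.length_singleton, pow_one]
      exact le_trans (mul_le_of_le_one_right hc0 (Dinv_le_one W)) (hc a)
    · have hlen : 1 ≤ l.length := List.length_pos_iff.mpr hl
      have h2 : 2 ≤ (l ++ [a]).length := by
        rw [List.length_append, List.length_singleton]; omega
      have hlow := W.lower (l ++ [a]) h2
      rw [List.dropLast_concat] at hlow
      have step : c * W.D⁻¹ ^ (l ++ [a]).length = c * W.D⁻¹ ^ l.length * W.D⁻¹ := by
        rw [List.length_append, List.length_singleton, pow_succ]; ring
      rw [step]
      calc c * W.D⁻¹ ^ l.length * W.D⁻¹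
          ≤ diam (W.X l) * W.D⁻¹ :=
            mul_le_mul_of_nonneg_right (ih hl) (Dinv_nonneg W)
        _ = W.D⁻¹ * diam (W.X l) := mul_comm _ _
        _ ≤ diam (W.X (l ++ [a])) := hlow

/-- Upper bound on diameters coming from nestedness (W1). -/
lemma diam_upper (W : WCMC ι M) {U : ℝ} (hU : ∀ a : ι, diam (W.X [a]) ≤ U) :
    ∀ i : List ι, i ≠ [] → diam (W.X i) ≤ U := by
  intro i
  induction i using List.reverseRecOn with
  | nil => intro h; exact absurd rfl h
  | append_singleton l a ih =>
    intro _
    rcases eq_or_ne l [] with rfl | hl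
    · simpa using hU a
    · have hlen : 1 ≤ l.length := List.length_pos_iff.mpr hl
      have h2 : 2 ≤ (l ++ [a]).length := by
        rw [List.length_append, List.length_singleton]; omega
      have hb : Bornology.IsBounded (W.X ((l ++ [a]).dropLast)) := by
        rw [List.dropLast_concat]; exact (W.compact l hl).isBounded
      have hmono := Metric.diam_mono (W.nested _ h2) hb
      rw [List.dropLast_concat] at hmono
      exact hmono.trans (ih hl)

lemma presSum_pos (W : WCMC ι M) (hne : Nonempty ι) (t : ℝ) {n : ℕ} (hn : 1 ≤ n) :
    0 < presSum W.X t n := by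
  haveI := hne
  unfold Moran.presSum
  apply Finset.sum_pos
  · intro f _
    exact Real.rpow_pos_of_pos (W.diam_pos _ (ofFn_ne_nil hn f)) t
  · exact Finset.univ_nonempty

lemma presSum_submul (W : WCMC ι M) {t : ℝ} (ht : 0 ≤ t) {m n : ℕ} (hm : 1 ≤ m) (hn : 1 ≤ n) :
    presSum W.X t (m + n) ≤ W.D ^ t * presSum W.X t m * presSum W.X t n := by
  have hD0 := D_pos W
  have heq : presSum W.X t (m + n)
      = ∑ p : (Fin m → ι) × (Fin n → ι),
          diam (W.X (List.ofFn p.1 ++ List.ofFn p.2)) ^ t := by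
    unfold Moran.presSum
    exact (Fintype.sum_equiv (Fin.appendEquiv m n)
      (fun p : (Fin m → ι) × (Fin n → ι) =>
        diam (W.X (List.ofFn p.1 ++ List.ofFn p.2)) ^ t)
      (fun f : Fin (m + n) → ι => diam (W.X (List.ofFn f)) ^ t)
      (fun p => by simp [Fin.appendEquiv])).symm
  rw [heq, mul_assoc]
  have hbound : ∀ p : (Fin m → ι) × (Fin n → ι),
      diam (W.X (List.ofFn p.1 ++ List.ofFn p.2)) ^ t
        ≤ W.D ^ t * (diam (W.X (List.ofFn p.1)) ^ t * diam (W.X (List.ofFn p.2)) ^ t) := by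
    intro p
    have h1 := W.submult (List.ofFn p.1) (List.ofFn p.2) (ofFn_ne_nil hm p.1) (ofFn_ne_nil hn p.2)
    have h2 : diam (W.X (List.ofFn p.1 ++ List.ofFn p.2)) ^ t
        ≤ (W.D * diam (W.X (List.ofFn p.1)) * diam (W.X (List.ofFn p.2))) ^ t :=
      Real.rpow_le_rpow Metric.diam_nonneg h1 ht
    refine h2.trans_eq ?_
    rw [Real.mul_rpow (mul_nonneg hD0.le Metric.diam_nonneg) Metric.diam_nonneg,
      Real.mul_rpow hD0.le Metric.diam_nonneg, mul_assoc]
  calc (∑ p : (Fin m → ι) × (Fin n → ι), diam (W.X (List.ofFn p.1 ++ List.ofFn p.2)) ^ t)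
      ≤ ∑ p : (Fin m → ι) × (Fin n → ι),
          W.D ^ t * (diam (W.X (List.ofFn p.1)) ^ t * diam (W.X (List.ofFn p.2)) ^ t) :=
        Finset.sum_le_sum fun p _ => hbound p
    _ = W.D ^ t * (presSum W.X t m * presSum W.X t n) := by
        rw [← Finset.mul_sum]
        congr 1
        unfold Moran.presSum
        rw [Fintype.sum_prod_type, Finset.sum_mul_sum]

lemma presSum_le_card_rpow (W : WCMC ι M) {t K : ℝ} (ht : 0 ≤ t)
    {n : ℕ} (hn : 1 ≤ n) (hK : ∀ f : Fin n → ι, diam (W.X (List.ofFn f)) ≤ K) :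
    presSum W.X t n ≤ (Fintype.card ι : ℝ) ^ n * K ^ t := by
  unfold Moran.presSum
  calc (∑ f : Fin n → ι, diam (W.X (List.ofFn f)) ^ t)
      ≤ ∑ _f : Fin n → ι, K ^ t :=
        Finset.sum_le_sum fun f _ => Real.rpow_le_rpow Metric.diam_nonneg (hK f) ht
    _ = (Fintype.card ι : ℝ) ^ n * K ^ t := by
        rw [Finset.sum_const, Finset.card_univ, nsmul_eq_mul, Fintype.card_fun,
          Fintype.card_fin]
        push_cast
        ring

lemma card_rpow_le_presSum (W : WCMC ι M) {t k : ℝ} (ht : 0 ≤ t) (hk0 : 0 ≤ k)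
    {n : ℕ} (hn : 1 ≤ n) (hk : ∀ f : Fin n → ι, k ≤ diam (W.X (List.ofFn f))) :
    (Fintype.card ι : ℝ) ^ n * k ^ t ≤ presSum W.X t n := by
  unfold Moran.presSum
  calc (Fintype.card ι : ℝ) ^ n * k ^ t
      = ∑ _f : Fin n → ι, k ^ t := by
        rw [Finset.sum_const, Finset.card_univ, nsmul_eq_mul, Fintype.card_fun,
          Fintype.card_fin]
        push_cast
        ring
    _ ≤ ∑ f : Fin n → ι, diam (W.X (List.ofFn f)) ^ t :=
        Finset.sum_le_sum fun f _ => Real.rpow_le_rpow hk0 (hk f) ht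

lemma presSum_shift_le (W : WCMC ι M) {s e K : ℝ} (he : 0 ≤ e)
    {n : ℕ} (hn : 1 ≤ n) (hK : ∀ f : Fin n → ι, diam (W.X (List.ofFn f)) ≤ K) :
    presSum W.X (s + e) n ≤ presSum W.X s n * K ^ e := by
  unfold Moran.presSum
  rw [Finset.sum_mul]
  apply Finset.sum_le_sum
  intro f _
  have hd0 : 0 < diam (W.X (List.ofFn f)) := W.diam_pos _ (ofFn_ne_nil hn f)
  rw [Real.rpow_add hd0]
  exact mul_le_mul_of_nonneg_left (Real.rpow_le_rpow hd0.le (hK f) he)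
    (Real.rpow_nonneg hd0.le s)

lemma presSum_shift_ge (W : WCMC ι M) {s e k : ℝ} (he : 0 ≤ e) (hk0 : 0 ≤ k)
    {n : ℕ} (hn : 1 ≤ n) (hk : ∀ f : Fin n → ι, k ≤ diam (W.X (List.ofFn f))) :
    presSum W.X s n * k ^ e ≤ presSum W.X (s + e) n := by
  unfold Moran.presSum
  rw [Finset.sum_mul]
  apply Finset.sum_le_sum
  intro f _
  have hd0 : 0 < diam (W.X (List.ofFn f)) := W.diam_pos _ (ofFn_ne_nil hn f)
  rw [Real.rpow_add hd0]
  exact mul_le_mul_of_nonneg_left (Real.rpow_le_rpow hk0 (hk f) he)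
    (Real.rpow_nonneg hd0.le s)

lemma presSum_holder (W : WCMC ι M) (hne : Nonempty ι) {s t a b : ℝ}
    (ha : 0 ≤ a) (hb : 0 ≤ b) (hab : a + b = 1) {n : ℕ} (hn : 1 ≤ n) :
    presSum W.X (a * s + b * t) n ≤ presSum W.X s n ^ a * presSum W.X t n ^ b := by
  have hA : 0 < presSum W.X s n := presSum_pos W hne s hn
  have hB : 0 < presSum W.X t n := presSum_pos W hne t hn
  have hAa : presSum W.X s n ^ a ≠ 0 := (Real.rpow_pos_of_pos hA a).ne'
  have hBb : presSum W.X t n ^ b ≠ 0 := (Real.rpow_pos_of_pos hB b).ne'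
  have key : ∀ f : Fin n → ι,
      diam (W.X (List.ofFn f)) ^ (a * s + b * t)
        ≤ presSum W.X s n ^ a * presSum W.X t n ^ b
          * (a * (diam (W.X (List.ofFn f)) ^ s / presSum W.X s n)
            + b * (diam (W.X (List.ofFn f)) ^ t / presSum W.X t n)) := by
    intro f
    set d := diam (W.X (List.ofFn f)) with hd
    have hd0 : 0 < d := W.diam_pos _ (ofFn_ne_nil hn f)
    have e1 : d ^ (a * s + b * t) = (d ^ s) ^ a * (d ^ t) ^ b := by
      rw [Real.rpow_add hd0, mul_comm a s, mul_comm b t, Real.rpow_mul hd0.le,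
        Real.rpow_mul hd0.le]
    have e2 : (d ^ s) ^ a * (d ^ t) ^ b
        = presSum W.X s n ^ a * presSum W.X t n ^ b
          * ((d ^ s / presSum W.X s n) ^ a * (d ^ t / presSum W.X t n) ^ b) := by
      rw [Real.div_rpow (Real.rpow_nonneg hd0.le s) hA.le,
        Real.div_rpow (Real.rpow_nonneg hd0.le t) hB.le]
      field_simp
    have e3 : (d ^ s / presSum W.X s n) ^ a * (d ^ t / presSum W.X t n) ^ b
        ≤ a * (d ^ s / presSum W.X s n) + b * (d ^ t / presSum W.X t n) :=
      Real.geom_mean_le_arith_mean2_weighted ha hb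
        (div_nonneg (Real.rpow_nonneg hd0.le s) hA.le)
        (div_nonneg (Real.rpow_nonneg hd0.le t) hB.le) hab
    rw [e1, e2]
    exact mul_le_mul_of_nonneg_left e3
      (mul_nonneg (Real.rpow_nonneg hA.le a) (Real.rpow_nonneg hB.le b))
  have hsum : (∑ f : Fin n → ι,
      (a * (diam (W.X (List.ofFn f)) ^ s / presSum W.X s n)
        + b * (diam (W.X (List.ofFn f)) ^ t / presSum W.X t n))) = 1 := by
    rw [Finset.sum_add_distrib]
    simp only [div_eq_mul_inv]
    rw [← Finset.mul_sum, ← Finset.mul_sum, ← Finset.sum_mul, ← Finset.sum_mul]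
    have e1 : (∑ f : Fin n → ι, diam (W.X (List.ofFn f)) ^ s) = presSum W.X s n := rfl
    have e2 : (∑ f : Fin n → ι, diam (W.X (List.ofFn f)) ^ t) = presSum W.X t n := rfl
    rw [e1, e2, mul_inv_cancel₀ hA.ne', mul_inv_cancel₀ hB.ne', mul_one, mul_one]
    exact hab
  have hfirst : presSum W.X (a * s + b * t) n
      ≤ ∑ f : Fin n → ι,
          presSum W.X s n ^ a * presSum W.X t n ^ b
            * (a * (diam (W.X (List.ofFn f)) ^ s / presSum W.X s n)
              + b * (diam (W.X (List.ofFn f)) ^ t / presSum W.X t n)) := by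
    unfold Moran.presSum
    exact Finset.sum_le_sum fun f _ => key f
  refine hfirst.trans_eq ?_
  rw [← Finset.mul_sum, hsum, mul_one]

/-- The auxiliary subadditive sequence `u t n = log (D^t · S_n(t))`. -/
noncomputable def uaux (W : WCMC ι M) (t : ℝ) (n : ℕ) : ℝ :=
  if n = 0 then 0 else Real.log (W.D ^ t * presSum W.X t n)

/-- The pressure, defined as the Fekete limit of `uaux`. -/
noncomputable def Paux (W : WCMC ι M) (t : ℝ) : ℝ :=
  sInf ((fun n : ℕ => uaux W t n / n) '' Set.Ici 1)

lemma uaux_eq (W : WCMC ι M) (hne : Nonempty ι) (t : ℝ) {n : ℕ} (hn : 1 ≤ n) :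
    uaux W t n = t * Real.log W.D + Real.log (presSum W.X t n) := by
  rw [uaux, if_neg (by omega)]
  rw [Real.log_mul (Real.rpow_pos_of_pos (D_pos W) t).ne' (presSum_pos W hne t hn).ne',
    Real.log_rpow (D_pos W)]

lemma uaux_subadd (W : WCMC ι M) (hne : Nonempty ι) {t : ℝ} (ht : 0 ≤ t) :
    Subadditive (uaux W t) := by
  intro m n
  rcases Nat.eq_zero_or_pos m with rfl | hm
  · rw [zero_add]
    have h0 : uaux W t 0 = 0 := if_pos rfl
    rw [h0, zero_add]
  · rcases Nat.eq_zero_or_pos n with rfl | hn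
    · rw [add_zero]
      have h0 : uaux W t 0 = 0 := if_pos rfl
      rw [h0, add_zero]
    · have hm1 : 1 ≤ m := hm
      have hn1 : 1 ≤ n := hn
      have hmn : 1 ≤ m + n := by omega
      rw [uaux_eq W hne t hmn, uaux_eq W hne t hm1, uaux_eq W hne t hn1]
      have hsub := presSum_submul W ht hm1 hn1
      have hlog := Real.log_le_log (presSum_pos W hne t hmn) hsub
      rw [Real.log_mul (mul_ne_zero (Real.rpow_pos_of_pos (D_pos W) t).ne'
          (presSum_pos W hne t hm1).ne') (presSum_pos W hne t hn1).ne',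
        Real.log_mul (Real.rpow_pos_of_pos (D_pos W) t).ne' (presSum_pos W hne t hm1).ne',
        Real.log_rpow (D_pos W)] at hlog
      linarith

end MoranAux

end Stmt1Aux

/-- For a WCMC the topological pressure
`P(t) = lim_{n→∞} (1/n) log Σ_{i∈I^n} diam(X_i)^t` exists (and is finite) for every
`t ≥ 0`, is convex on `[0,∞)`, satisfies `P(t) ≥ P(0) − t log D`, and has a zero
`t ≥ 0`. -/
theorem stmt1 {ι M : Type*} [Fintype ι] [MetricSpace M]
    (hcard : 2 ≤ Fintype.card ι) (W : Moran.WCMC ι M) :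
    ∃ P : ℝ → ℝ, Moran.IsPressure W.X P ∧ ConvexOn ℝ (Set.Ici 0) P ∧
      (∀ t : ℝ, 0 ≤ t → P 0 - t * Real.log W.D ≤ P t) ∧
      ∃ t : ℝ, 0 ≤ t ∧ P t = 0 := by
  classical
  have hne : Nonempty ι := Fintype.card_pos_iff.mp (by omega)
  obtain ⟨a₀⟩ := hne
  have hD0 : (0:ℝ) < W.D := MoranAux.D_pos W
  have hlogD0 : 0 ≤ Real.log W.D := Real.log_nonneg W.one_le_D
  -- the minimal and maximal first-generation diameters
  obtain ⟨amin, -, hamin⟩ := Finset.exists_min_image (Finset.univ : Finset ι)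
    (fun a => Metric.diam (W.X [a])) ⟨a₀, Finset.mem_univ a₀⟩
  set c := Metric.diam (W.X [amin]) with hcdef
  have hc0 : 0 < c := W.diam_pos _ (by simp)
  have hc : ∀ a : ι, c ≤ Metric.diam (W.X [a]) := fun a => hamin a (Finset.mem_univ a)
  obtain ⟨amax, -, hamax⟩ := Finset.exists_max_image (Finset.univ : Finset ι)
    (fun a => Metric.diam (W.X [a])) ⟨a₀, Finset.mem_univ a₀⟩
  set K := max (Metric.diam (W.X [amax])) 1 with hKdef
  have hK1 : (1:ℝ) ≤ K := le_max_right _ _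
  have hK0 : (0:ℝ) < K := lt_of_lt_of_le one_pos hK1
  have hKb : ∀ i : List ι, i ≠ [] → Metric.diam (W.X i) ≤ K := fun i hi =>
    (MoranAux.diam_upper W (fun a => hamax a (Finset.mem_univ a)) i hi).trans (le_max_left _ _)
  have hN2 : (2:ℝ) ≤ (Fintype.card ι : ℝ) := by exact_mod_cast hcard
  have hN0 : (0:ℝ) < (Fintype.card ι : ℝ) := by linarith
  have hlogN : 0 < Real.log (Fintype.card ι : ℝ) := Real.log_pos (by linarith)
  have hlow : ∀ n : ℕ, 1 ≤ n → ∀ f : Fin n → ι,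
      c * W.D⁻¹ ^ n ≤ Metric.diam (W.X (List.ofFn f)) := by
    intro n hn f
    have h := MoranAux.diam_lower W hc0.le hc (List.ofFn f) (MoranAux.ofFn_ne_nil hn f)
    rwa [List.length_ofFn] at h
  have hkn_pos : ∀ n : ℕ, 0 < c * W.D⁻¹ ^ n :=
    fun n => mul_pos hc0 (pow_pos (inv_pos.mpr hD0) n)
  have hlogk : ∀ n : ℕ, Real.log (c * W.D⁻¹ ^ n) = Real.log c - n * Real.log W.D := by
    intro n
    rw [Real.log_mul hc0.ne' (pow_ne_zero _ (inv_ne_zero hD0.ne')), Real.log_pow,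
      Real.log_inv]
    ring
  have hS : ∀ (t : ℝ) {n : ℕ}, 1 ≤ n → 0 < Moran.presSum W.X t n :=
    fun t {n} hn => MoranAux.presSum_pos W ⟨a₀⟩ t hn
  have hSlb : ∀ (t : ℝ), 0 ≤ t → ∀ {n : ℕ}, 1 ≤ n →
      (Fintype.card ι : ℝ) ^ n * (c * W.D⁻¹ ^ n) ^ t ≤ Moran.presSum W.X t n :=
    fun t ht {n} hn => MoranAux.card_rpow_le_presSum W ht (hkn_pos n).le hn (hlow n hn)
  have hsub : ∀ {t : ℝ}, 0 ≤ t → Subadditive (MoranAux.uaux W t) :=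
    fun {t} ht => MoranAux.uaux_subadd W ⟨a₀⟩ ht
  -- boundedness below of `u n / n`
  have hbdd : ∀ (t : ℝ), 0 ≤ t → BddBelow (Set.range fun n : ℕ => MoranAux.uaux W t n / n) := by
    intro t ht
    refine ⟨min 0 (Real.log (Fintype.card ι : ℝ) - |t * Real.log c| - t * Real.log W.D), ?_⟩
    rintro x ⟨n, rfl⟩
    rcases Nat.eq_zero_or_pos n with rfl | hn
    · refine le_trans (min_le_left _ _) ?_
      simp [MoranAux.uaux]
    · have hn1 : 1 ≤ n := hn
      refine le_trans (min_le_right _ _) ?_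
      have hnR : (0:ℝ) < n := by exact_mod_cast hn
      have hn1R : (1:ℝ) ≤ n := by exact_mod_cast hn1
      rw [le_div_iff₀ hnR]
      have hlog : (n:ℝ) * Real.log (Fintype.card ι : ℝ)
          + t * (Real.log c - n * Real.log W.D)
          ≤ Real.log (Moran.presSum W.X t n) := by
        have h1 := Real.log_le_log
          (mul_pos (pow_pos hN0 n) (Real.rpow_pos_of_pos (hkn_pos n) t)) (hSlb t ht hn1)
        rwa [Real.log_mul (pow_pos hN0 n).ne' (Real.rpow_pos_of_pos (hkn_pos n) t).ne',
          Real.log_pow, Real.log_rpow (hkn_pos n), hlogk n] at h1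
      rw [MoranAux.uaux_eq W ⟨a₀⟩ t hn1]
      nlinarith [abs_nonneg (t * Real.log c), neg_abs_le (t * Real.log c),
        mul_nonneg ht hlogD0,
        mul_le_mul_of_nonneg_left hn1R (abs_nonneg (t * Real.log c))]
  have hdiv0 : ∀ C : ℝ, Filter.Tendsto (fun n : ℕ => C / n) Filter.atTop (nhds 0) :=
    fun C => Filter.Tendsto.div_atTop tendsto_const_nhds tendsto_natCast_atTop_atTop
  -- the pressure and its defining limit
  have hT : ∀ {t : ℝ}, 0 ≤ t →
      Filter.Tendsto (fun n : ℕ => 1 / (n:ℝ) * Real.log (Moran.presSum W.X t n))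
        Filter.atTop (nhds (MoranAux.Paux W t)) := by
    intro t ht
    have h1 : Filter.Tendsto (fun n : ℕ => MoranAux.uaux W t n / n) Filter.atTop
        (nhds (MoranAux.Paux W t)) := by
      have h0 := (hsub ht).tendsto_lim (hbdd t ht)
      unfold MoranAux.Paux; unfold Subadditive.lim at h0; exact h0
    have h2 := h1.sub (hdiv0 (t * Real.log W.D))
    rw [sub_zero] at h2
    refine Filter.Tendsto.congr' ?_ h2
    filter_upwards [Filter.eventually_ge_atTop 1] with n hn
    have hnR : (0:ℝ) < n := by exact_mod_cast hn
    rw [MoranAux.uaux_eq W ⟨a₀⟩ t hn]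
    field_simp
    ring
  -- P is nonincreasing
  have hmono : ∀ s t : ℝ, 0 ≤ s → s ≤ t → MoranAux.Paux W t ≤ MoranAux.Paux W s := by
    intro s t hs hst
    have ht0 : 0 ≤ t := hs.trans hst
    have h2 : Filter.Tendsto
        (fun n : ℕ => 1 / (n:ℝ) * Real.log (Moran.presSum W.X s n)
          + ((t - s) * Real.log K) / n) Filter.atTop (nhds (MoranAux.Paux W s + 0)) :=
      (hT hs).add (hdiv0 _)
    rw [add_zero] at h2
    refine le_of_tendsto_of_tendsto (hT ht0) h2 ?_
    filter_upwards [Filter.eventually_ge_atTop 1] with n hn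
    have hnR : (0:ℝ) < n := by exact_mod_cast hn
    have hKn : ∀ f : Fin n → ι, Metric.diam (W.X (List.ofFn f)) ≤ K :=
      fun f => hKb _ (MoranAux.ofFn_ne_nil hn f)
    have h3 := MoranAux.presSum_shift_le W (s := s) (by linarith : (0:ℝ) ≤ t - s) hn hKn
    have hteq : s + (t - s) = t := by ring
    rw [hteq] at h3
    have h4 := Real.log_le_log (hS t hn) h3
    rw [Real.log_mul (hS s hn).ne' (Real.rpow_pos_of_pos hK0 _).ne',
      Real.log_rpow hK0] at h4
    have h5 := mul_le_mul_of_nonneg_left h4 (by positivity : (0:ℝ) ≤ 1 / (n:ℝ))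
    refine h5.trans_eq ?_
    field_simp
  -- lower Lipschitz bound
  have hlower : ∀ s t : ℝ, 0 ≤ s → s ≤ t →
      MoranAux.Paux W s - (t - s) * Real.log W.D ≤ MoranAux.Paux W t := by
    intro s t hs hst
    have ht0 : 0 ≤ t := hs.trans hst
    have h2 : Filter.Tendsto
        (fun n : ℕ => 1 / (n:ℝ) * Real.log (Moran.presSum W.X s n)
          + ((t - s) * Real.log c) / n - (t - s) * Real.log W.D) Filter.atTop
        (nhds (MoranAux.Paux W s + 0 - (t - s) * Real.log W.D)) :=
      ((hT hs).add (hdiv0 _)).sub tendsto_const_nhds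
    rw [add_zero] at h2
    refine le_of_tendsto_of_tendsto h2 (hT ht0) ?_
    filter_upwards [Filter.eventually_ge_atTop 1] with n hn
    have hnR : (0:ℝ) < n := by exact_mod_cast hn
    have h3 := MoranAux.presSum_shift_ge W (s := s) (by linarith : (0:ℝ) ≤ t - s) (hkn_pos n).le hn
      (hlow n hn)
    have hteq : s + (t - s) = t := by ring
    rw [hteq] at h3
    have h4 := Real.log_le_log
      (mul_pos (hS s hn) (Real.rpow_pos_of_pos (hkn_pos n) _)) h3
    rw [Real.log_mul (hS s hn).ne' (Real.rpow_pos_of_pos (hkn_pos n) _).ne',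
      Real.log_rpow (hkn_pos n), hlogk n] at h4
    have h5 := mul_le_mul_of_nonneg_left h4 (by positivity : (0:ℝ) ≤ 1 / (n:ℝ))
    refine le_trans (le_of_eq ?_) h5
    field_simp
    ring
  -- value at 0
  have hS0 : ∀ n : ℕ, Moran.presSum W.X 0 n = (Fintype.card ι : ℝ) ^ n := by
    intro n
    unfold Moran.presSum
    simp only [Real.rpow_zero]
    rw [Finset.sum_const, Finset.card_univ, nsmul_eq_mul, mul_one, Fintype.card_fun,
      Fintype.card_fin]
    push_cast
    ring
  have hP0 : MoranAux.Paux W 0 = Real.log (Fintype.card ι : ℝ) := by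
    have h2 : Filter.Tendsto (fun n : ℕ => 1 / (n:ℝ) * Real.log (Moran.presSum W.X 0 n))
        Filter.atTop (nhds (Real.log (Fintype.card ι : ℝ))) := by
      refine Filter.Tendsto.congr' ?_ tendsto_const_nhds
      filter_upwards [Filter.eventually_ge_atTop 1] with n hn
      have hnR : (0:ℝ) < n := by exact_mod_cast hn
      rw [hS0 n, Real.log_pow]
      field_simp
    exact tendsto_nhds_unique (hT le_rfl) h2
  -- the word-length from (W2) and the associated maximal diameter θ < D⁻¹
  obtain ⟨n₀, hn₀1, hsmall⟩ := W.small
  have hn₀R : (0:ℝ) < n₀ := by exact_mod_cast hn₀1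
  obtain ⟨f₀, -, hf₀⟩ := Finset.exists_max_image (Finset.univ : Finset (Fin n₀ → ι))
    (fun f => Metric.diam (W.X (List.ofFn f))) ⟨fun _ => a₀, Finset.mem_univ _⟩
  set θ := Metric.diam (W.X (List.ofFn f₀)) with hθdef
  have hθpos : 0 < θ := W.diam_pos _ (MoranAux.ofFn_ne_nil hn₀1 f₀)
  have hθlt : θ < W.D⁻¹ := hsmall _ (List.length_ofFn (f := f₀))
  have hθb : ∀ f : Fin n₀ → ι, Metric.diam (W.X (List.ofFn f)) ≤ θ :=
    fun f => hf₀ f (Finset.mem_univ f)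
  have hPub : ∀ t : ℝ, 0 ≤ t → MoranAux.Paux W t
      ≤ Real.log (Fintype.card ι : ℝ) + t * ((Real.log W.D + Real.log θ) / n₀) := by
    intro t ht
    have hPle : MoranAux.Paux W t ≤ MoranAux.uaux W t n₀ / n₀ :=
      csInf_le ((hbdd t ht).mono (Set.image_subset_range _ _)) ⟨n₀, hn₀1, rfl⟩
    refine hPle.trans ?_
    have hSθ := MoranAux.presSum_le_card_rpow W ht hn₀1 hθb
    have hlog := Real.log_le_log (hS t hn₀1) hSθ
    rw [Real.log_mul (pow_pos hN0 n₀).ne' (Real.rpow_pos_of_pos hθpos t).ne',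
      Real.log_pow, Real.log_rpow hθpos] at hlog
    rw [MoranAux.uaux_eq W ⟨a₀⟩ t hn₀1, div_le_iff₀ hn₀R]
    have hgoal : (Real.log (Fintype.card ι : ℝ) + t * ((Real.log W.D + Real.log θ) / n₀)) * n₀
        = n₀ * Real.log (Fintype.card ι : ℝ) + t * Real.log W.D + t * Real.log θ := by
      field_simp
      ring
    rw [hgoal]
    linarith
  have hεneg : (Real.log W.D + Real.log θ) / n₀ < 0 := by
    have h1 : Real.log θ < Real.log W.D⁻¹ := Real.log_lt_log hθpos hθlt
    rw [Real.log_inv] at h1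
    exact div_neg_of_neg_of_pos (by linarith) hn₀R
  set ε := (Real.log W.D + Real.log θ) / n₀ with hεdef
  set t₁ := (Real.log (Fintype.card ι : ℝ) + 1) / (-ε) with ht₁def
  have ht₁pos : 0 < t₁ := div_pos (by linarith) (by linarith)
  have ht₁ε : t₁ * ε = -(Real.log (Fintype.card ι : ℝ) + 1) := by
    rw [ht₁def]
    field_simp [ne_of_lt hεneg]
  have hPt₁ : MoranAux.Paux W t₁ ≤ -1 := by
    have h := hPub t₁ ht₁pos.le
    linarith
  -- continuity on [0, t₁] via a Lipschitz bound
  have hcont : ContinuousOn (MoranAux.Paux W) (Set.Icc 0 t₁) := by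
    have hlip : LipschitzOnWith (Real.toNNReal (Real.log W.D)) (MoranAux.Paux W)
        (Set.Ici 0) := by
      rw [lipschitzOnWith_iff_dist_le_mul]
      intro x hx y hy
      rw [Set.mem_Ici] at hx hy
      have hcoe : ((Real.toNNReal (Real.log W.D)) : ℝ) = Real.log W.D :=
        Real.coe_toNNReal _ hlogD0
      rw [hcoe, Real.dist_eq, Real.dist_eq]
      rcases le_total x y with h | h
      · have h1 := hmono x y hx h
        have h2 := hlower x y hx h
        rw [abs_of_nonneg (by linarith : (0:ℝ) ≤ MoranAux.Paux W x - MoranAux.Paux W y),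
          abs_of_nonpos (by linarith : x - y ≤ 0)]
        nlinarith
      · have h1 := hmono y x hy h
        have h2 := hlower y x hy h
        rw [abs_of_nonpos (by linarith : MoranAux.Paux W x - MoranAux.Paux W y ≤ 0),
          abs_of_nonneg (by linarith : (0:ℝ) ≤ x - y)]
        nlinarith
    exact hlip.continuousOn.mono (fun z hz => hz.1)
  have hIVT := intermediate_value_Icc' ht₁pos.le hcont
  have h0mem : (0:ℝ) ∈ Set.Icc (MoranAux.Paux W t₁) (MoranAux.Paux W 0) :=
    ⟨by linarith, by rw [hP0]; linarith⟩
  obtain ⟨t₂, ht₂mem, hPt₂⟩ := hIVT h0mem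
  -- convexity
  have hconv : ConvexOn ℝ (Set.Ici 0) (MoranAux.Paux W) := by
    refine ⟨convex_Ici 0, ?_⟩
    intro s hs t ht a b ha hb hab
    rw [Set.mem_Ici] at hs ht
    simp only [smul_eq_mul]
    have hst : 0 ≤ a * s + b * t := add_nonneg (mul_nonneg ha hs) (mul_nonneg hb ht)
    have h2 : Filter.Tendsto
        (fun n : ℕ => a * (1 / (n:ℝ) * Real.log (Moran.presSum W.X s n))
          + b * (1 / (n:ℝ) * Real.log (Moran.presSum W.X t n))) Filter.atTop
        (nhds (a * MoranAux.Paux W s + b * MoranAux.Paux W t)) :=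
      ((hT hs).const_mul a).add ((hT ht).const_mul b)
    refine le_of_tendsto_of_tendsto (hT hst) h2 ?_
    filter_upwards [Filter.eventually_ge_atTop 1] with n hn
    have hH := MoranAux.presSum_holder W (s := s) (t := t) ⟨a₀⟩ ha hb hab hn
    have hlog := Real.log_le_log (hS _ hn) hH
    rw [Real.log_mul (Real.rpow_pos_of_pos (hS s hn) a).ne'
        (Real.rpow_pos_of_pos (hS t hn) b).ne',
      Real.log_rpow (hS s hn), Real.log_rpow (hS t hn)] at hlog
    have h5 := mul_le_mul_of_nonneg_left hlog (by positivity : (0:ℝ) ≤ 1 / (n:ℝ))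
    refine h5.trans_eq ?_
    ring
  refine ⟨MoranAux.Paux W, fun t ht => hT ht, hconv, ?_, t₂, ht₂mem.1, hPt₂⟩
  intro t ht
  have h := hlower 0 t le_rfl ht
  rw [hP0] at h ⊢
  simpa using h
end

section
/- For a weakly controlled Moran construction the topological pressure is strictly decreasing: if 0 ≤ s < t then P(t) < P(s). -/
open Metric Set Filter MeasureTheory Topology
open scoped ENNReal ENat

/-- For a WCMC the topological pressure is strictly decreasing:
if `0 ≤ s < t` then `P(t) < P(s)`. -/
theorem stmt2 {ι M : Type*} [Fintype ι] [MetricSpace M]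
    (hcard : 2 ≤ Fintype.card ι) (W : Moran.WCMC ι M)
    (P : ℝ → ℝ) (hP : Moran.IsPressure W.X P) :
    ∀ s t : ℝ, 0 ≤ s → s < t → P t < P s := by
  intro s t hs hst
  obtain ⟨n, hn1, hsmall⟩ := W.small
  have hD1 : (1:ℝ) ≤ W.D := W.one_le_D
  have hD0 : (0:ℝ) < W.D := lt_of_lt_of_le one_pos hD1
  have hι : Nonempty ι := Fintype.card_pos_iff.mp (by omega)
  have hne : (Finset.univ : Finset (Fin n → ι)).Nonempty := Finset.univ_nonempty
  set c : ℝ := (Finset.univ : Finset (Fin n → ι)).sup' hne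
      (fun f => diam (W.X (List.ofFn f))) with hc
  have hofn_ne : ∀ f : Fin n → ι, List.ofFn f ≠ [] := by
    intro f h
    have := congrArg List.length h
    simp at this
    omega
  have hc_lt : c < W.D⁻¹ := by
    rw [hc, Finset.sup'_lt_iff]
    intro f _
    exact hsmall _ (by simp)
  have hc_pos : 0 < c := by
    obtain ⟨f⟩ : Nonempty (Fin n → ι) := inferInstance
    refine lt_of_lt_of_le (W.diam_pos (List.ofFn f) (hofn_ne f)) ?_
    rw [hc]
    exact Finset.le_sup' (fun f => diam (W.X (List.ofFn f))) (Finset.mem_univ f)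
  set ρ : ℝ := W.D * c with hρ
  have hρ0 : 0 < ρ := mul_pos hD0 hc_pos
  have hρ1 : ρ < 1 := by
    have := mul_lt_mul_of_pos_left hc_lt hD0
    rwa [mul_inv_cancel₀ (ne_of_gt hD0)] at this
  have hlen_c : ∀ l : List ι, l.length = n → diam (W.X l) ≤ c := by
    intro l hl
    have hEq : l = List.ofFn (fun k : Fin n => l.get (Fin.cast hl.symm k)) := by
      apply List.ext_get
      · simp [hl]
      · intro i h1 h2
        simp
    rw [hEq, hc]
    exact Finset.le_sup' (fun f => diam (W.X (List.ofFn f))) (Finset.mem_univ _)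
  have key : ∀ k : ℕ, ∀ l : List ι, l.length = (k+1)*n →
      diam (W.X l) ≤ W.D⁻¹ * ρ^(k+1) := by
    intro k
    induction k with
    | zero =>
      intro l hl
      have h1 := hlen_c l (by simpa using hl)
      have : W.D⁻¹ * ρ^1 = c := by
        rw [hρ, pow_one, ← mul_assoc, inv_mul_cancel₀ (ne_of_gt hD0), one_mul]
      linarith
    | succ k ih =>
      intro l hl
      have hnle : n ≤ l.length := by rw [hl]; nlinarith
      have htake : (l.take n).length = n := by simp [hl]; omega
      have hdrop : (l.drop n).length = (k+1)*n := by simp [hl]; ring_nf; omega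
      have htne : l.take n ≠ [] := by
        intro h; have := congrArg List.length h; simp [htake] at this; omega
      have hdne : l.drop n ≠ [] := by
        intro h; have := congrArg List.length h; rw [hdrop] at this; simp at this; omega
      have hsub := W.submult (l.take n) (l.drop n) htne hdne
      rw [List.take_append_drop] at hsub
      have h1 := hlen_c _ htake
      have h2 := ih _ hdrop
      have hd0 : 0 ≤ diam (W.X (l.drop n)) := diam_nonneg
      have ht0 : 0 ≤ diam (W.X (l.take n)) := diam_nonneg
      have s1 : W.D * diam (W.X (l.take n)) * diam (W.X (l.drop n))
          ≤ W.D * c * diam (W.X (l.drop n)) :=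
        mul_le_mul_of_nonneg_right (mul_le_mul_of_nonneg_left h1 hD0.le) hd0
      have s2 : W.D * c * diam (W.X (l.drop n)) ≤ W.D * c * (W.D⁻¹ * ρ^(k+1)) :=
        mul_le_mul_of_nonneg_left h2 (by positivity)
      have : W.D * diam (W.X (l.take n)) * diam (W.X (l.drop n))
          ≤ W.D * c * (W.D⁻¹ * ρ^(k+1)) := le_trans s1 s2
      have heq : W.D * c * (W.D⁻¹ * ρ^(k+1)) = W.D⁻¹ * ρ^(k+2) := by
        rw [hρ]; field_simp; ring
      linarith
  -- positivity of presSum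
  have hpos : ∀ u : ℝ, ∀ m : ℕ, 0 < Moran.presSum W.X u m ∨ m = 0 := by
    intro u m
    rcases Nat.eq_zero_or_pos m with h | h
    · exact Or.inr h
    · left
      apply Finset.sum_pos
      · intro i _
        refine Real.rpow_pos_of_pos (W.diam_pos _ ?_) u
        intro hnil
        have := congrArg List.length hnil
        simp at this
        omega
      · exact Finset.univ_nonempty
  have hpos' : ∀ u : ℝ, ∀ m : ℕ, 1 ≤ m → 0 < Moran.presSum W.X u m := by
    intro u m hm
    rcases hpos u m with h | h
    · exact h
    · omega
  -- sum bound
  have hsum : ∀ k : ℕ, 1 ≤ k → Moran.presSum W.X t (k*n) ≤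
      (W.D⁻¹ * ρ^k)^(t-s) * Moran.presSum W.X s (k*n) := by
    intro k hk
    unfold Moran.presSum
    rw [Finset.mul_sum]
    apply Finset.sum_le_sum
    intro i _
    have hlen : (List.ofFn i).length = k*n := by simp
    have hlen' : (List.ofFn i).length = (k-1+1)*n := by rw [hlen]; congr 1; omega
    have hd : 0 < diam (W.X (List.ofFn i)) := by
      apply W.diam_pos
      intro hnil
      have := congrArg List.length hnil
      rw [hlen] at this
      simp at this
      rcases this with h | h <;> omega
    have hb := key (k-1) _ hlen'
    rw [show k - 1 + 1 = k by omega] at hb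
    have h1 : diam (W.X (List.ofFn i)) ^ t
        = diam (W.X (List.ofFn i)) ^ (t-s) * diam (W.X (List.ofFn i)) ^ s := by
      rw [← Real.rpow_add hd]; ring_nf
    rw [h1]
    apply mul_le_mul_of_nonneg_right _ (Real.rpow_nonneg hd.le s)
    exact Real.rpow_le_rpow hd.le hb (by linarith)
  -- limits
  have hnn : (0:ℝ) < n := by exact_mod_cast hn1
  have hmn : Tendsto (fun k : ℕ => k * n) atTop atTop := by
    apply tendsto_atTop_atTop.mpr
    intro b
    exact ⟨b, fun a ha => le_trans ha (Nat.le_mul_of_pos_right a (by omega))⟩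
  have hA : Tendsto (fun k : ℕ => (1/((k*n : ℕ):ℝ)) * Real.log (Moran.presSum W.X t (k*n)))
      atTop (𝓝 (P t)) := (hP t (hs.trans hst.le)).comp hmn
  have h0 : Tendsto (fun k : ℕ => (1/((k*n : ℕ):ℝ))) atTop (𝓝 0) :=
    tendsto_one_div_atTop_nhds_zero_nat.comp hmn
  have hB : Tendsto (fun k : ℕ =>
      (1/((k*n : ℕ):ℝ)) * Real.log (Moran.presSum W.X s (k*n))
      + (t-s) * Real.log W.D⁻¹ * (1/((k*n : ℕ):ℝ))
      + (t-s) * Real.log ρ / n) atTop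
      (𝓝 (P s + (t-s) * Real.log W.D⁻¹ * 0 + (t-s) * Real.log ρ / n)) :=
    (((hP s hs).comp hmn).add (tendsto_const_nhds.mul h0)).add tendsto_const_nhds
  have hle : ∀ᶠ k : ℕ in atTop,
      (1/((k*n : ℕ):ℝ)) * Real.log (Moran.presSum W.X t (k*n)) ≤
      (1/((k*n : ℕ):ℝ)) * Real.log (Moran.presSum W.X s (k*n))
      + (t-s) * Real.log W.D⁻¹ * (1/((k*n : ℕ):ℝ))
      + (t-s) * Real.log ρ / n := by
    filter_upwards [eventually_ge_atTop 1] with k hk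
    have hm1 : 1 ≤ k*n := by nlinarith
    have hSt := hpos' t (k*n) hm1
    have hSs := hpos' s (k*n) hm1
    have hBpos : 0 < W.D⁻¹ * ρ^k := by positivity
    have hlog : Real.log (Moran.presSum W.X t (k*n)) ≤
        (t-s) * (Real.log W.D⁻¹ + k * Real.log ρ) + Real.log (Moran.presSum W.X s (k*n)) := by
      calc Real.log (Moran.presSum W.X t (k*n))
          ≤ Real.log ((W.D⁻¹ * ρ^k)^(t-s) * Moran.presSum W.X s (k*n)) :=
            Real.log_le_log hSt (hsum k hk)
        _ = (t-s) * (Real.log W.D⁻¹ + k * Real.log ρ)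
            + Real.log (Moran.presSum W.X s (k*n)) := by
            rw [Real.log_mul (ne_of_gt (Real.rpow_pos_of_pos hBpos _)) (ne_of_gt hSs),
              Real.log_rpow hBpos,
              Real.log_mul (by positivity) (by positivity), Real.log_pow]
    have hmpos : (0:ℝ) < ((k*n : ℕ):ℝ) := by exact_mod_cast hm1
    have h2 := mul_le_mul_of_nonneg_left hlog (le_of_lt (one_div_pos.mpr hmpos))
    have hcast : ((k*n : ℕ):ℝ) = (k:ℝ) * n := by push_cast; ring
    have hk0 : (0:ℝ) < (k:ℝ) := by exact_mod_cast hk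
    have heq : (1/((k*n : ℕ):ℝ)) * ((t-s) * (Real.log W.D⁻¹ + k * Real.log ρ)
        + Real.log (Moran.presSum W.X s (k*n)))
        = (1/((k*n : ℕ):ℝ)) * Real.log (Moran.presSum W.X s (k*n))
        + (t-s) * Real.log W.D⁻¹ * (1/((k*n : ℕ):ℝ))
        + (t-s) * Real.log ρ / n := by
      rw [hcast]
      field_simp
      ring
    linarith [heq ▸ h2]
  have hfin := le_of_tendsto_of_tendsto hA hB hle
  have hlogρ : Real.log ρ < 0 := Real.log_neg hρ0 hρ1
  have hneg : (t-s) * Real.log ρ / n < 0 := by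
    apply div_neg_of_neg_of_pos _ hnn
    exact mul_neg_of_pos_of_neg (by linarith) hlogρ
  nlinarith [hfin]
end

section
/- If the topological pressure of a weakly controlled Moran construction satisfies P(t) ≤ 0 for a given t ≥ 0, then the upper Minkowski dimension of the limit set E satisfies dim_M(E) ≤ t. -/
open Metric Set Filter MeasureTheory Topology
open scoped ENNReal ENat

section Aux
open Metric Set Filter Topology
variable {ι M : Type*} [Fintype ι] [MetricSpace M] (W : Moran.WCMC ι M)

lemma WD_pos : (0:ℝ) < W.D := lt_of_lt_of_le one_pos W.one_le_D

lemma X_nonempty (i : List ι) (hi : i ≠ []) : (W.X i).Nonempty := by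
  rcases Set.eq_empty_or_nonempty (W.X i) with h | h
  · exfalso; have := W.diam_pos i hi; rw [h] at this; simp at this
  · exact h

lemma X_bounded (i : List ι) (hi : i ≠ []) : Bornology.IsBounded (W.X i) :=
  (W.compact i hi).isBounded

/-- prefix monotonicity of diameters -/
lemma diam_le_take : ∀ (k : ℕ) (w : List ι), w.length ≤ k → w ≠ [] → ∀ m, 1 ≤ m →
    diam (W.X w) ≤ diam (W.X (w.take m)) := by
  intro k
  induction k with
  | zero => intro w hw hne m hm; simp [List.length_eq_zero_iff] at hw; exact absurd hw hne
  | succ k ih =>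
    intro w hw hne m hm
    rcases le_or_gt w.length m with h | h
    · rw [List.take_of_length_le h]
    · have h2 : 2 ≤ w.length := by
        have := List.length_pos_iff.mpr hne; omega
      have hdne : w.dropLast ≠ [] := by
        have : w.dropLast.length = w.length - 1 := List.length_dropLast (xs := w)
        intro hc; rw [hc] at this; simp at this; omega
      have hsub : W.X w ⊆ W.X w.dropLast := W.nested w h2
      have h1 : diam (W.X w) ≤ diam (W.X w.dropLast) :=
        Metric.diam_mono hsub (X_bounded W _ hdne)
      have htk : w.dropLast.take m = w.take m := by
        rw [List.dropLast_eq_take, List.take_take]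
        congr 1; omega
      calc diam (W.X w) ≤ diam (W.X w.dropLast) := h1
        _ ≤ diam (W.X (w.dropLast.take m)) := by
            apply ih w.dropLast _ hdne m hm
            rw [List.length_dropLast]; omega
        _ = diam (W.X (w.take m)) := by rw [htk]

end Aux

section Aux2
open Metric Set Filter Topology
variable {ι M : Type*} [Fintype ι] [Nonempty ι] [MetricSpace M] (W : Moran.WCMC ι M)

lemma exists_decay : ∃ (c θ : ℝ) (n₀ : ℕ), 1 ≤ c ∧ 0 < θ ∧ θ < 1 ∧ 1 ≤ n₀ ∧
    ∀ w : List ι, w ≠ [] → diam (W.X w) ≤ c * θ ^ (w.length / n₀) := by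
  obtain ⟨n₀, hn₀, hsmall⟩ := W.small
  have hD := WD_pos W
  have hne : (Finset.univ : Finset (Fin n₀ → ι)).Nonempty := Finset.univ_nonempty
  set θ : ℝ := Finset.univ.sup' hne (fun v : Fin n₀ → ι => W.D * diam (W.X (List.ofFn v))) with hθ
  have hofn_ne : ∀ (n : ℕ), 1 ≤ n → ∀ (v : Fin n → ι), (List.ofFn v) ≠ [] := by
    intro n hn v hc
    have : (List.ofFn v).length = n := List.length_ofFn (f := v)
    rw [hc] at this; simp at this; omega
  have hθpos : 0 < θ := by
    obtain ⟨v⟩ : Nonempty (Fin n₀ → ι) := inferInstance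
    have h1 : 0 < W.D * diam (W.X (List.ofFn v)) :=
      mul_pos hD (W.diam_pos _ (hofn_ne n₀ hn₀ v))
    refine lt_of_lt_of_le h1 ?_
    rw [hθ]
    exact Finset.le_sup' (fun v : Fin n₀ → ι => W.D * diam (W.X (List.ofFn v))) (Finset.mem_univ v)
  have hθ1 : θ < 1 := by
    rw [hθ, Finset.sup'_lt_iff]
    intro v _
    have h1 : diam (W.X (List.ofFn v)) < W.D⁻¹ := hsmall _ (List.length_ofFn (f := v))
    calc W.D * diam (W.X (List.ofFn v)) < W.D * W.D⁻¹ :=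
          mul_lt_mul_of_pos_left h1 hD
      _ = 1 := mul_inv_cancel₀ hD.ne'
  have hbase : ∀ w : List ι, w.length = n₀ → W.D * diam (W.X w) ≤ θ := by
    intro w hw
    set v : Fin n₀ → ι := fun q => w.get (Fin.cast hw.symm q) with hv
    have hww : List.ofFn v = w := by
      apply List.ext_getElem
      · simp [hw]
      · intro q h1 h2
        simp [hv, List.get_eq_getElem]
    have := Finset.le_sup' (fun v : Fin n₀ → ι => W.D * diam (W.X (List.ofFn v)))
      (Finset.mem_univ v)
    rwa [hww] at this
  have hblock : ∀ (k : ℕ) (w : List ι), w.length = (k+1) * n₀ →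
      W.D * diam (W.X w) ≤ θ ^ (k+1) := by
    intro k
    induction k with
    | zero => intro w hw; rw [pow_one]; exact hbase w (by omega)
    | succ k ih =>
      intro w hw
      set w₁ := w.take ((k+1) * n₀) with hw₁
      set w₂ := w.drop ((k+1) * n₀) with hw₂
      have hlew : (k+1) * n₀ ≤ w.length := by rw [hw]; nlinarith
      have hl1 : w₁.length = (k+1) * n₀ := by
        rw [hw₁, List.length_take]; omega
      have hl2 : w₂.length = n₀ := by
        rw [hw₂, List.length_drop, hw]; ring_nf; omega
      have hne1 : w₁ ≠ [] := by
        intro hc; rw [hc] at hl1; simp at hl1; omega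
      have hne2 : w₂ ≠ [] := by
        intro hc; rw [hc] at hl2; simp at hl2; omega
      have happ : w₁ ++ w₂ = w := List.take_append_drop _ w
      have hsm := W.submult w₁ w₂ hne1 hne2
      rw [happ] at hsm
      have h1 : W.D * diam (W.X w₁) ≤ θ ^ (k+1) := ih w₁ hl1
      have h2 : W.D * diam (W.X w₂) ≤ θ := hbase w₂ hl2
      have hd2 : 0 ≤ W.D * diam (W.X w₂) := by positivity
      calc W.D * diam (W.X w) ≤ W.D * (W.D * diam (W.X w₁) * diam (W.X w₂)) :=
            mul_le_mul_of_nonneg_left hsm hD.le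
        _ = (W.D * diam (W.X w₁)) * (W.D * diam (W.X w₂)) := by ring
        _ ≤ θ ^ (k+1) * θ := by
            apply mul_le_mul h1 h2 hd2 (by positivity)
        _ = θ ^ (k+2) := by ring
  -- first-level diameter bound
  have hne1 : (Finset.univ : Finset ι).Nonempty := Finset.univ_nonempty
  set Δ : ℝ := Finset.univ.sup' hne1 (fun a : ι => diam (W.X [a])) with hΔ
  refine ⟨max 1 Δ, θ, n₀, le_max_left _ _, hθpos, hθ1, hn₀, ?_⟩
  intro w hw
  set k := w.length / n₀ with hk
  clear_value k
  rcases Nat.eq_zero_or_pos k with h0 | hkpos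
  · rw [h0, pow_zero, mul_one]
    obtain ⟨a, tl, rfl⟩ : ∃ a tl, w = a :: tl := by
      cases w with
      | nil => exact absurd rfl hw
      | cons a tl => exact ⟨a, tl, rfl⟩
    have h1 : diam (W.X (a :: tl)) ≤ diam (W.X ((a :: tl).take 1)) :=
      diam_le_take W (a :: tl).length _ le_rfl hw 1 le_rfl
    have h2 : (a :: tl).take 1 = [a] := rfl
    rw [h2] at h1
    refine h1.trans (le_trans ?_ (le_max_right 1 Δ))
    rw [hΔ]
    exact Finset.le_sup' (fun a : ι => diam (W.X [a])) (Finset.mem_univ a)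
  · have hkn : k * n₀ ≤ w.length := by rw [hk]; exact Nat.div_mul_le_self _ _
    have h1 : diam (W.X w) ≤ diam (W.X (w.take (k * n₀))) :=
      diam_le_take W w.length w le_rfl hw _ (by nlinarith)
    have hl : (w.take (k * n₀)).length = k * n₀ := by
      rw [List.length_take]; omega
    obtain ⟨k', rfl⟩ : ∃ k', k = k' + 1 := ⟨k - 1, by omega⟩
    have h2 := hblock k' _ hl
    have h3 : diam (W.X (w.take ((k'+1) * n₀))) ≤ θ ^ (k'+1) :=
      le_trans (le_mul_of_one_le_left Metric.diam_nonneg W.one_le_D) h2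
    calc diam (W.X w) ≤ θ ^ (k'+1) := h1.trans h3
      _ ≤ max 1 Δ * θ ^ (k'+1) := le_mul_of_one_le_left (by positivity) (le_max_left _ _)

end Aux2

section Aux3
open Metric Set Filter Topology
variable {ι M : Type*} [Fintype ι] [MetricSpace M] (W : Moran.WCMC ι M)

lemma pre_length (j : ℕ → ι) (n : ℕ) : (Moran.pre j n).length = n := by
  simp [Moran.pre]

lemma pre_ne_nil (j : ℕ → ι) (n : ℕ) (hn : 1 ≤ n) : Moran.pre j n ≠ [] := by
  intro hc
  have := pre_length j n
  rw [hc] at this; simp at this; omega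

lemma pre_dropLast (j : ℕ → ι) (n : ℕ) :
    (Moran.pre j (n+1)).dropLast = Moran.pre j n := by
  unfold Moran.pre
  rw [List.ofFn_succ']
  rw [List.concat_eq_append, List.dropLast_concat]
  congr 1

lemma mem_Zr_of_mem_limit (c θ : ℝ) (n₀ : ℕ) (hc : 1 ≤ c) (hθ0 : 0 < θ) (hθ1 : θ < 1)
    (hn₀ : 1 ≤ n₀)
    (hdecay : ∀ w : List ι, w ≠ [] → diam (W.X w) ≤ c * θ ^ (w.length / n₀))
    (x : M) (hx : x ∈ Moran.limitSet W.X) (r' : ℝ) (hr' : 0 < r') :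
    ∃ i ∈ Moran.Zr W.X r', x ∈ W.X i := by
  classical
  obtain ⟨j, hj⟩ := hx
  have hex : ∃ n : ℕ, diam (W.X (Moran.pre j (n+1))) ≤ r' := by
    obtain ⟨k, hk⟩ : ∃ k : ℕ, c * θ ^ k < r' := by
      have htend : Tendsto (fun k : ℕ => c * θ ^ k) atTop (nhds 0) := by
        have := tendsto_pow_atTop_nhds_zero_of_lt_one hθ0.le hθ1
        simpa using this.const_mul c
      exact ((htend.eventually (eventually_lt_nhds hr')).exists)
    refine ⟨(k+1) * n₀ - 1, ?_⟩
    have hlen : (k+1) * n₀ - 1 + 1 = (k+1) * n₀ := by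
      have : 1 ≤ (k+1) * n₀ := by nlinarith
      omega
    rw [hlen]
    have h1 := hdecay (Moran.pre j ((k+1) * n₀)) (pre_ne_nil j _ (by nlinarith))
    rw [pre_length] at h1
    have hdiv : (k+1) * n₀ / n₀ = k + 1 := Nat.mul_div_cancel _ (show 0 < n₀ by omega)
    rw [hdiv] at h1
    refine h1.trans (le_of_lt (lt_of_le_of_lt ?_ hk))
    have : θ ^ (k+1) ≤ θ ^ k := pow_le_pow_of_le_one hθ0.le hθ1.le (by omega)
    nlinarith
  set n := Nat.find hex with hn
  have hfind : diam (W.X (Moran.pre j (n+1))) ≤ r' := by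
    rw [hn]; exact Nat.find_spec hex
  have hmin : ∀ m, m < n → r' < diam (W.X (Moran.pre j (m+1))) := by
    intro m hm
    have := Nat.find_min hex (hn ▸ hm)
    push_neg at this
    exact this
  clear_value n
  refine ⟨Moran.pre j (n+1), ⟨pre_ne_nil j _ (by omega), hfind, ?_⟩, hj (n+1) (by omega)⟩
  rcases Nat.eq_zero_or_pos n with h0 | hpos
  · left; rw [h0]; exact pre_length j 1
  · right
    obtain ⟨n', rfl⟩ : ∃ n', n = n' + 1 := ⟨n - 1, by omega⟩
    rw [pre_dropLast]
    exact hmin n' (by omega)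

end Aux3

set_option maxHeartbeats 1000000 in
/-- If the topological pressure of a WCMC satisfies `P(t) ≤ 0` for a
given `t ≥ 0`, then the upper Minkowski dimension of the limit set `E` satisfies
`dim_M(E) ≤ t`. -/
theorem stmt3 {ι M : Type*} [Fintype ι] [MetricSpace M]
    (hcard : 2 ≤ Fintype.card ι) (W : Moran.WCMC ι M)
    (P : ℝ → ℝ) (hP : Moran.IsPressure W.X P)
    (t : ℝ) (ht : 0 ≤ t) (hPt : P t ≤ 0) :
    Moran.upMink (Moran.limitSet W.X) ≤ (t : EReal) := by
  classical
  have hι : Nonempty ι := Fintype.card_pos_iff.mp (by omega)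
  obtain ⟨c, θ, n₀, hc, hθ0, hθ1, hn₀, hdecay⟩ := exists_decay W
  have hD := WD_pos W
  have hM : Nonempty M := by
    obtain ⟨a⟩ := hι
    exact ⟨(X_nonempty W [a] (by simp)).choose⟩
  set pt : List ι → M := fun i => if h : (W.X i).Nonempty then h.choose
    else Classical.arbitrary M with hptdef
  have hpt : ∀ i : List ι, i ≠ [] → pt i ∈ W.X i := by
    intro i hi
    rw [hptdef]
    simp only
    rw [dif_pos (X_nonempty W i hi)]
    exact (X_nonempty W i hi).choose_spec
  -- constants
  set ℓ : ℝ := -Real.log θ with hℓdef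
  have hℓ : 0 < ℓ := by
    rw [hℓdef]; simpa using Real.log_neg hθ0 hθ1
  set C₄ : ℝ := n₀ / ℓ with hC₄def
  have hn₀R : (1:ℝ) ≤ (n₀:ℝ) := by exact_mod_cast hn₀
  have hC₄ : 0 < C₄ := div_pos (by linarith) hℓ
  clear_value C₄
  have hlogc : 0 ≤ Real.log c := Real.log_nonneg hc
  have hlog2 : 0 ≤ Real.log 2 := Real.log_nonneg one_le_two
  set C₆ : ℝ := C₄ * (Real.log c + Real.log 2) + n₀ with hC₆def
  have hC₆ : 1 ≤ C₆ := by
    have h0 : 0 ≤ C₄ * (Real.log c + Real.log 2) :=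
      mul_nonneg hC₄.le (by linarith)
    rw [hC₆def]; linarith
  clear_value C₆
  set K : ℝ := (Fintype.card ι : ℝ) with hKdef
  have hK0 : 0 ≤ K := by rw [hKdef]; positivity
  clear_value K
  -- reduce to the ε-version
  suffices H : ∀ ε : ℝ, 0 < ε → Moran.upMink (Moran.limitSet W.X) ≤ ((t + ε : ℝ) : EReal) by
    by_contra hcon
    push_neg at hcon
    have h1 := H 1 one_pos
    have hxtop : Moran.upMink (Moran.limitSet W.X) ≠ ⊤ := by
      intro h; rw [h] at h1
      exact absurd h1 (not_le.mpr (EReal.coe_lt_top _))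
    have hxbot : Moran.upMink (Moran.limitSet W.X) ≠ ⊥ := by
      intro h; rw [h] at hcon
      exact absurd hcon (by simp)
    set y := (Moran.upMink (Moran.limitSet W.X)).toReal with hy
    have hxy : Moran.upMink (Moran.limitSet W.X) = (y : EReal) :=
      (EReal.coe_toReal hxtop hxbot).symm
    rw [hxy] at hcon h1
    have hty : t < y := EReal.coe_lt_coe_iff.mp hcon
    have hε := H ((y - t)/2) (by linarith)
    rw [hxy] at hε
    have := EReal.coe_le_coe_iff.mp hε
    linarith
  intro ε hε
  set ε₀ : ℝ := ε / (2 * C₄) with hε₀def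
  have hε₀ : 0 < ε₀ := by rw [hε₀def]; exact div_pos hε (by linarith)
  clear_value ε₀
  -- pressure bound
  obtain ⟨N, hN⟩ : ∃ N : ℕ, ∀ n ≥ N,
      (1 / (n:ℝ)) * Real.log (Moran.presSum W.X t n) < ε₀ := by
    have := (hP t ht).eventually_lt_const (lt_of_le_of_lt hPt hε₀)
    exact eventually_atTop.mp this
  set A : ℝ := 1 + ∑ m ∈ Finset.range N, |Moran.presSum W.X t m| with hAdef
  have hA1 : 1 ≤ A := by
    have h0 : 0 ≤ ∑ m ∈ Finset.range N, |Moran.presSum W.X t m| :=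
      Finset.sum_nonneg fun m _ => abs_nonneg _
    rw [hAdef]; linarith
  clear_value A
  have hS : ∀ n : ℕ, 1 ≤ n → Moran.presSum W.X t n ≤ A * Real.exp (ε₀ * n) := by
    intro n hn1
    have hexp1 : 1 ≤ Real.exp (ε₀ * n) :=
      Real.one_le_exp (mul_nonneg hε₀.le (Nat.cast_nonneg n))
    rcases lt_or_ge n N with h | h
    · have h2 : |Moran.presSum W.X t n| ≤ ∑ m ∈ Finset.range N, |Moran.presSum W.X t m| :=
        Finset.single_le_sum (f := fun m => |Moran.presSum W.X t m|) (fun m _ => abs_nonneg _) (Finset.mem_range.mpr h)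
      have h3 : Moran.presSum W.X t n ≤ A := by
        have := le_abs_self (Moran.presSum W.X t n)
        rw [hAdef]; linarith
      exact h3.trans (le_mul_of_one_le_right (by linarith) hexp1)
    · have h1 := hN n h
      have hnpos : (0:ℝ) < n := by exact_mod_cast hn1
      have hlog : Real.log (Moran.presSum W.X t n) ≤ ε₀ * n := by
        have h2 : Real.log (Moran.presSum W.X t n)
            = n * ((1 / (n:ℝ)) * Real.log (Moran.presSum W.X t n)) := by
          field_simp
        have h3 : (n:ℝ) * ((1 / (n:ℝ)) * Real.log (Moran.presSum W.X t n))
            ≤ (n:ℝ) * ε₀ := mul_le_mul_of_nonneg_left h1.le hnpos.le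
        rw [h2]; linarith only [h3]
      rcases le_or_gt (Moran.presSum W.X t n) 0 with hp | hp
      · exact hp.trans (mul_nonneg (by linarith) (Real.exp_pos _).le)
      · have h2 := (Real.log_le_iff_le_exp hp).mp hlog
        exact h2.trans (le_mul_of_one_le_left (Real.exp_pos _).le hA1)
  -- the eventual (in u = -log r) arithmetic condition
  have hu : ∀ᶠ u : ℝ in atTop,
      0 ≤ Real.log c + Real.log 2 + u ∧ 1 ≤ u ∧
      Real.log (C₄ * u + C₆) + (Real.log (K + 1) + Real.log A) + t * Real.log (2 * W.D)
        + ε₀ * (C₄ * u + C₆) ≤ ε * u := by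
    have hC₇ : (0:ℝ) < C₄ + C₆ := by linarith
    have hlin : ∀ᶠ u : ℝ in atTop, Real.log u ≤ ε/4 * u := by
      filter_upwards [Real.isLittleO_log_id_atTop.bound (show (0:ℝ) < ε/4 by linarith),
        eventually_ge_atTop (1:ℝ)] with u hb h1
      have hb' : |Real.log u| ≤ ε/4 * |u| := by
        simpa [Real.norm_eq_abs] using hb
      calc Real.log u ≤ |Real.log u| := le_abs_self _
        _ ≤ ε/4 * |u| := hb'
        _ = ε/4 * u := by rw [abs_of_nonneg (by linarith)]
    have hconst : ∀ᶠ u : ℝ in atTop,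
        Real.log (C₄ + C₆) + (Real.log (K+1) + Real.log A) + t * Real.log (2*W.D)
          + ε₀ * C₆ ≤ ε/4 * u := by
      have htd : Tendsto (fun u : ℝ => ε/4 * u) atTop atTop :=
        Tendsto.const_mul_atTop (show (0:ℝ) < ε/4 by linarith) tendsto_id
      exact htd.eventually_ge_atTop _
    filter_upwards [hlin, hconst, eventually_ge_atTop (1:ℝ),
      eventually_ge_atTop (-(Real.log c + Real.log 2))] with u h1 h2 h3 h4
    refine ⟨by linarith, h3, ?_⟩
    have hb1 : C₄ * u + C₆ ≤ (C₄ + C₆) * u := by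
      have h6 : C₆ * 1 ≤ C₆ * u := mul_le_mul_of_nonneg_left h3 (by linarith)
      have h7 : (C₄ + C₆) * u = C₄ * u + C₆ * u := by ring
      linarith only [h6, h7]
    have h5 : (0:ℝ) < C₄ * u + C₆ := by
      have h6 : 0 < C₄ * u := mul_pos hC₄ (by linarith)
      linarith only [h6, hC₆]
    have hb2 : Real.log (C₄ * u + C₆) ≤ Real.log (C₄ + C₆) + Real.log u := by
      calc Real.log (C₄*u+C₆) ≤ Real.log ((C₄ + C₆) * u) := Real.log_le_log h5 hb1
        _ = Real.log (C₄ + C₆) + Real.log u := Real.log_mul hC₇.ne' (by linarith)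
    have hb3 : ε₀ * (C₄ * u + C₆) = ε/2 * u + ε₀ * C₆ := by
      rw [hε₀def]; field_simp
    have hfin : ε/4 * u + (ε/4 * u + ε/2 * u) = ε * u := by ring
    linarith [hb2, h1, h2, hb3, hfin]
  have htends : Tendsto (fun r : ℝ => -Real.log r) (𝓝[>] (0:ℝ)) atTop :=
    tendsto_neg_atBot_atTop.comp Real.tendsto_log_nhdsGT_zero
  rw [Moran.upMink]
  apply Filter.limsup_le_of_le (by isBoundedDefault)
  filter_upwards [htends.eventually hu,
    Ioo_mem_nhdsGT_of_mem (Set.mem_Ico.mpr ⟨le_refl (0:ℝ), one_pos⟩)] with r hcond hrIoo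
  obtain ⟨hr0, hr1⟩ := hrIoo
  set u := -Real.log r with hudef
  clear_value u
  obtain ⟨hu0, hu1, hukey⟩ := hcond
  have hupos : (0:ℝ) < u := lt_of_lt_of_le one_pos hu1
  set r' := r / 2 with hr'def
  have hr'0 : 0 < r' := by rw [hr'def]; linarith
  clear_value r'
  set Lr : ℝ := C₄ * u + C₆ with hLrdef
  have hLr1 : 1 ≤ Lr := by
    have h0 : 0 ≤ C₄ * u := mul_nonneg hC₄.le (by linarith)
    rw [hLrdef]; linarith
  clear_value Lr
  set Ln := ⌊Lr⌋₊ with hLndef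
  have hLn1 : 1 ≤ Ln := Nat.le_floor (by exact_mod_cast hLr1)
  have hLnLr : (Ln : ℝ) ≤ Lr := by rw [hLndef]; exact Nat.floor_le (by linarith)
  clear_value Ln
  -- length bound for words in Z(r')
  have hlen : ∀ i ∈ Moran.Zr W.X r', i.length ≤ Ln := by
    intro i hi
    obtain ⟨hine, hdle, hor⟩ := hi
    rw [hLndef]
    apply Nat.le_floor
    have hilen : 1 ≤ i.length := List.length_pos_iff.mpr hine
    rcases Nat.lt_or_ge i.length 2 with h2 | h2
    · have he : i.length = 1 := by omega
      rw [he]; push_cast; linarith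
    · have hdrop : r' < diam (W.X i.dropLast) := by
        rcases hor with h | h
        · exact absurd h (by omega)
        · exact h
      have hdlne : i.dropLast ≠ [] := by
        intro hcn
        have h6 := List.length_dropLast (xs := i)
        rw [hcn] at h6; simp at h6; omega
      have hdec := hdecay i.dropLast hdlne
      rw [List.length_dropLast] at hdec
      set k := (i.length - 1) / n₀ with hkdef
      have hcpos : (0:ℝ) < c := by linarith
      clear_value k
      have hθk : r' / c < θ ^ k := by
        have h3 : r' < c * θ ^ k := lt_of_lt_of_le hdrop hdec
        rw [div_lt_iff₀ hcpos]
        have h4 : c * θ ^ k = θ ^ k * c := by ring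
        linarith only [h3, h4]
      have hlog : Real.log (r'/c) < (k:ℝ) * Real.log θ := by
        have h7 := Real.log_lt_log (div_pos hr'0 hcpos) hθk
        rwa [Real.log_pow] at h7
      have hlogr' : Real.log (r'/c) = Real.log r - Real.log 2 - Real.log c := by
        rw [hr'def, Real.log_div (by linarith) hcpos.ne',
          Real.log_div hr0.ne' (by norm_num)]
      have hkb : (k:ℝ) ≤ (Real.log c + Real.log 2 + u) / ℓ := by
        rw [le_div_iff₀ hℓ]
        have hθl : Real.log θ = -ℓ := by rw [hℓdef]; ring
        have h9 : Real.log r - Real.log 2 - Real.log c < (k:ℝ) * (-ℓ) := by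
          rw [← hθl, ← hlogr']; exact hlog
        rw [hudef]
        have h10 : (k:ℝ) * (-ℓ) = -((k:ℝ) * ℓ) := by ring
        linarith only [h9, h10]
      have hmod : n₀ * k + (i.length - 1) % n₀ = i.length - 1 := by
        rw [hkdef]; exact Nat.div_add_mod _ _
      have hmlt : (i.length - 1) % n₀ < n₀ := Nat.mod_lt _ (by omega)
      have hlenn : i.length ≤ n₀ * (k + 1) := by
        rw [Nat.mul_succ]
        generalize hgen : n₀ * k = p at hmod ⊢
        omega
      calc (i.length : ℝ) ≤ (n₀ : ℝ) * ((k:ℝ) + 1) := by exact_mod_cast hlenn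
        _ = (n₀:ℝ) * (k:ℝ) + n₀ := by ring
        _ ≤ (n₀:ℝ) * ((Real.log c + Real.log 2 + u)/ℓ) + n₀ := by
            have h8 := mul_le_mul_of_nonneg_left hkb (Nat.cast_nonneg n₀ : (0:ℝ) ≤ (n₀:ℝ))
            linarith
        _ = Lr := by rw [hLrdef, hC₆def, hC₄def]; field_simp; ring
  -- the finsets
  set T : (n : ℕ) → Finset (Fin n → ι) :=
    fun n => Finset.univ.filter (fun v => List.ofFn v ∈ Moran.Zr W.X r') with hTdef
  set Fs : ℕ → Finset M := fun n => (T n).image (fun v => pt (List.ofFn v)) with hFsdef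
  set s : Finset M := (Finset.Icc 1 Ln).biUnion Fs with hsdef
  -- covering
  have hcover : Moran.limitSet W.X ⊆ ⋃ y ∈ s, ball y r := by
    intro x hx
    obtain ⟨i, hiZ, hxi⟩ :=
      mem_Zr_of_mem_limit W c θ n₀ hc hθ0 hθ1 hn₀ hdecay x hx r' hr'0
    have hine : i ≠ [] := hiZ.1
    have hilen : 1 ≤ i.length := List.length_pos_iff.mpr hine
    have hiLn : i.length ≤ Ln := hlen i hiZ
    have hofv : List.ofFn (fun q : Fin i.length => i[(q:ℕ)]) = i := List.ofFn_getElem (xs := i)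
    have hmem : pt i ∈ s := by
      rw [hsdef]
      apply Finset.mem_biUnion.mpr
      refine ⟨i.length, Finset.mem_Icc.mpr ⟨hilen, hiLn⟩, ?_⟩
      rw [hFsdef]
      apply Finset.mem_image.mpr
      refine ⟨fun q : Fin i.length => i[(q:ℕ)], ?_, by rw [hofv]⟩
      rw [hTdef]
      simp only [Finset.mem_filter, Finset.mem_univ, true_and]
      rw [hofv]; exact hiZ
    have hd : dist x (pt i) ≤ diam (W.X i) :=
      dist_le_diam_of_mem (X_bounded W i hine) hxi (hpt i hine)
    have hdr : diam (W.X i) ≤ r' := hiZ.2.1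
    refine Set.mem_iUnion₂.mpr ⟨pt i, hmem, ?_⟩
    rw [mem_ball]
    rw [hr'def] at hdr
    linarith
  have hcovN : Moran.coverNum (Moran.limitSet W.X) r ≤ s.card :=
    Nat.sInf_le ⟨s, rfl, hcover⟩
  -- counting
  set B : ℝ := (2 * W.D / r) ^ t * (A * Real.exp (ε₀ * Lr)) with hBdef
  have h2D : (0:ℝ) < 2 * W.D := by linarith
  have h2Dr : (0:ℝ) < 2 * W.D / r := div_pos h2D hr0
  have hB0 : 0 < B := by
    rw [hBdef]
    exact mul_pos (Real.rpow_pos_of_pos h2Dr t)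
      (mul_pos (by linarith) (Real.exp_pos _))
  clear_value B
  have hB1 : 1 ≤ B := by
    rw [hBdef]
    have h1 : (1:ℝ) ≤ (2 * W.D / r) ^ t := by
      apply Real.one_le_rpow _ ht
      rw [le_div_iff₀ hr0]
      linarith only [hr1, W.one_le_D, hr0]
    have h2 : (1:ℝ) ≤ A * Real.exp (ε₀ * Lr) := by
      have h0 := Real.one_le_exp (mul_nonneg hε₀.le (by linarith : (0:ℝ) ≤ Lr))
      calc (1:ℝ) = 1 * 1 := by ring
        _ ≤ A * Real.exp (ε₀ * Lr) := mul_le_mul hA1 h0 zero_le_one (by linarith)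
    calc (1:ℝ) = 1 * 1 := by ring
      _ ≤ (2 * W.D / r) ^ t * (A * Real.exp (ε₀ * Lr)) :=
          mul_le_mul h1 h2 (by norm_num) (le_trans zero_le_one h1)
  have hcount : ∀ n ∈ Finset.Icc 1 Ln, ((Fs n).card : ℝ) ≤ K + B := by
    intro n hn
    rw [Finset.mem_Icc] at hn
    have hc1 : ((Fs n).card : ℝ) ≤ ((T n).card : ℝ) := by
      rw [hFsdef]; exact_mod_cast Finset.card_image_le
    rcases eq_or_lt_of_le hn.1 with h1 | h2
    · have hcard : (T n).card ≤ Fintype.card ι := by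
        calc (T n).card ≤ Fintype.card (Fin n → ι) := Finset.card_le_univ _
          _ = Fintype.card ι ^ n := by rw [Fintype.card_fun, Fintype.card_fin]
          _ = Fintype.card ι := by rw [← h1, pow_one]
      calc ((Fs n).card : ℝ) ≤ ((T n).card : ℝ) := hc1
        _ ≤ K := by rw [hKdef]; exact_mod_cast hcard
        _ ≤ K + B := by linarith
    · have h2n : 2 ≤ n := h2
      have hdlow : ∀ v ∈ T n, (r / (2 * W.D)) ^ t ≤ diam (W.X (List.ofFn v)) ^ t := by
        intro v hv
        have hv' : List.ofFn v ∈ Moran.Zr W.X r' := by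
          rw [hTdef] at hv
          simpa using (Finset.mem_filter.mp hv).2
        obtain ⟨hne_, hle_, hor_⟩ := hv'
        have hlen_ : (List.ofFn v).length = n := List.length_ofFn (f := v)
        have hdrop : r' < diam (W.X (List.ofFn v).dropLast) := by
          rcases hor_ with h | h
          · rw [hlen_] at h; exact absurd h (by omega)
          · exact h
        have hlower := W.lower (List.ofFn v) (by rw [hlen_]; omega)
        have hbase : r / (2 * W.D) ≤ diam (W.X (List.ofFn v)) := by
          have e1 : r / (2 * W.D) = W.D⁻¹ * r' := by
            rw [hr'def, inv_mul_eq_div, div_div]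
          calc r / (2*W.D) = W.D⁻¹ * r' := e1
            _ ≤ W.D⁻¹ * diam (W.X (List.ofFn v).dropLast) :=
                mul_le_mul_of_nonneg_left hdrop.le (inv_nonneg.mpr hD.le)
            _ ≤ diam (W.X (List.ofFn v)) := hlower
        exact Real.rpow_le_rpow (div_nonneg hr0.le (by linarith)) hbase ht
      have hsum : ((T n).card : ℝ) * (r / (2*W.D)) ^ t ≤ Moran.presSum W.X t n := by
        calc ((T n).card : ℝ) * (r/(2*W.D))^t = ∑ _v ∈ T n, (r/(2*W.D))^t := by
              rw [Finset.sum_const, nsmul_eq_mul]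
          _ ≤ ∑ v ∈ T n, diam (W.X (List.ofFn v)) ^ t := Finset.sum_le_sum hdlow
          _ ≤ ∑ v : Fin n → ι, diam (W.X (List.ofFn v)) ^ t :=
              Finset.sum_le_sum_of_subset_of_nonneg (Finset.subset_univ _)
                (fun v _ _ => Real.rpow_nonneg Metric.diam_nonneg t)
          _ = Moran.presSum W.X t n := rfl
      have hpres : Moran.presSum W.X t n ≤ A * Real.exp (ε₀ * Lr) := by
        refine (hS n hn.1).trans ?_
        have hnLr : (n:ℝ) ≤ Lr := le_trans (by exact_mod_cast hn.2) hLnLr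
        have h5 : Real.exp (ε₀ * n) ≤ Real.exp (ε₀ * Lr) :=
          Real.exp_le_exp.mpr (mul_le_mul_of_nonneg_left hnLr hε₀.le)
        exact mul_le_mul_of_nonneg_left h5 (by linarith)
      have hrt : (0:ℝ) < (r / (2*W.D)) ^ t :=
        Real.rpow_pos_of_pos (div_pos hr0 (by linarith)) t
      have hTc : ((T n).card : ℝ) ≤ B := by
        have hd2 : ((T n).card : ℝ) ≤ (A * Real.exp (ε₀ * Lr)) / ((r/(2*W.D))^t) := by
          rw [le_div_iff₀ hrt]; exact hsum.trans hpres
        have hinv : (2*W.D/r)^t = ((r/(2*W.D))^t)⁻¹ := by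
          rw [← Real.inv_rpow (div_nonneg hr0.le (by linarith)), inv_div]
        calc ((T n).card:ℝ) ≤ (A * Real.exp (ε₀*Lr)) / ((r/(2*W.D))^t) := hd2
          _ = (2*W.D/r)^t * (A * Real.exp (ε₀*Lr)) := by
              rw [hinv, div_eq_mul_inv]; ring
          _ = B := by rw [hBdef]
      calc ((Fs n).card : ℝ) ≤ ((T n).card : ℝ) := hc1
        _ ≤ B := hTc
        _ ≤ K + B := by linarith
  have hsc : (s.card : ℝ) ≤ Lr * ((K + 1) * B) := by
    have h1 : (s.card : ℝ) ≤ ∑ n ∈ Finset.Icc 1 Ln, ((Fs n).card : ℝ) := by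
      rw [hsdef]
      exact_mod_cast Finset.card_biUnion_le
    have h2 : ∑ n ∈ Finset.Icc 1 Ln, ((Fs n).card : ℝ) ≤ (Ln : ℝ) * (K + B) := by
      calc ∑ n ∈ Finset.Icc 1 Ln, ((Fs n).card : ℝ) ≤ ∑ n ∈ Finset.Icc 1 Ln, (K + B) :=
            Finset.sum_le_sum hcount
        _ = ((Finset.Icc 1 Ln).card : ℝ) * (K + B) := by
            rw [Finset.sum_const, nsmul_eq_mul]
        _ = (Ln : ℝ) * (K + B) := by rw [Nat.card_Icc]; simp
    have h3 : K + B ≤ (K + 1) * B := by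
      have h6 : 0 ≤ K * (B - 1) := mul_nonneg hK0 (by linarith)
      have h7 : (K + 1) * B = K * (B - 1) + (K + B) := by ring
      linarith only [h6, h7]
    have h4 : (Ln : ℝ) * (K + B) ≤ Lr * ((K + 1) * B) := by
      exact mul_le_mul hLnLr h3 (by linarith) (by linarith)
    linarith
  -- take logs
  have hRB1 : 1 ≤ Lr * ((K + 1) * B) := by
    have h5 : (1:ℝ) ≤ (K + 1) * B := by
      have h6 : 0 ≤ K * B := mul_nonneg hK0 (by linarith)
      have h7 : (K + 1) * B = K * B + B := by ring
      linarith only [h6, h7, hB1]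
    calc (1:ℝ) = 1 * 1 := by ring
      _ ≤ Lr * ((K + 1) * B) := mul_le_mul hLr1 h5 (by norm_num) (by linarith)
  have hlogcov : Real.log (Moran.coverNum (Moran.limitSet W.X) r)
      ≤ Real.log (Lr * ((K + 1) * B)) := by
    rcases Nat.eq_zero_or_pos (Moran.coverNum (Moran.limitSet W.X) r) with h0 | h0
    · rw [h0]; push_cast; rw [Real.log_zero]; exact Real.log_nonneg hRB1
    · apply Real.log_le_log (by exact_mod_cast h0)
      calc ((Moran.coverNum (Moran.limitSet W.X) r : ℝ)) ≤ (s.card : ℝ) := by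
            exact_mod_cast hcovN
        _ ≤ Lr * ((K + 1) * B) := hsc
  have hlogRB : Real.log (Lr * ((K + 1) * B))
      = Real.log Lr + Real.log (K + 1)
        + (t * Real.log (2 * W.D) + t * u + (Real.log A + ε₀ * Lr)) := by
    have hApos : (0:ℝ) < A := by linarith
    have hpow : (0:ℝ) < (2 * W.D / r) ^ t := Real.rpow_pos_of_pos h2Dr t
    have hexp : (0:ℝ) < Real.exp (ε₀ * Lr) := Real.exp_pos _
    have hK1 : (0:ℝ) < K + 1 := by linarith
    rw [Real.log_mul (by linarith : Lr ≠ 0) (mul_pos hK1 hB0).ne',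
      Real.log_mul hK1.ne' hB0.ne', hBdef,
      Real.log_mul hpow.ne' (mul_pos hApos hexp).ne',
      Real.log_mul hApos.ne' hexp.ne',
      Real.log_exp, Real.log_rpow h2Dr,
      Real.log_div h2D.ne' hr0.ne', hudef]
    ring
  -- conclude
  have hfinal : Real.log (Moran.coverNum (Moran.limitSet W.X) r) ≤ (t + ε) * u := by
    rw [hlogRB] at hlogcov
    linarith only [hlogcov, hukey]
  have hq : Real.log (Moran.coverNum (Moran.limitSet W.X) r) / u ≤ t + ε := by
    rw [div_le_iff₀ hupos]; linarith only [hfinal]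
  exact_mod_cast hq
end

section
/- Given a weakly controlled Moran construction and any t ≥ 0 with topological pressure P(t) ≥ 0, the set function M^t satisfies M^t(I^∞) > 0. -/
set_option linter.unusedSectionVars false


open Metric Set Filter MeasureTheory Topology
open scoped ENNReal ENat

namespace Stmt4Aux

open Metric Set Filter Topology
open scoped ENNReal

lemma record (g : ℕ → ℝ) (hg : ∀ m, 1 ≤ m → 1 ≤ g m) :
    ∃ K : ℝ, 1 ≤ K ∧ ∀ B : ℕ, ∃ N : ℕ, B ≤ N ∧ 1 ≤ N ∧
      ∀ m, 1 ≤ m → m ≤ N → g m ≤ K * g N := by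
  by_cases h : ∃ S : ℝ, ∀ m, g m ≤ S
  · obtain ⟨S, hS⟩ := h
    refine ⟨max S 1, le_max_right _ _, fun B =>
      ⟨max B 1, le_max_left _ _, le_max_right _ _, fun m hm hmN => ?_⟩⟩
    calc g m ≤ S := hS m
      _ ≤ max S 1 := le_max_left _ _
      _ = max S 1 * 1 := (mul_one _).symm
      _ ≤ max S 1 * g (max B 1) := by
          exact mul_le_mul_of_nonneg_left (hg _ (le_max_right _ _))
            (le_trans zero_le_one (le_max_right _ _))
  · push_neg at h
    refine ⟨1, le_refl _, fun B => ?_⟩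
    classical
    set V : ℝ := (Finset.range (B + 2)).sup' (by simp) g with hV
    obtain ⟨N0, hN0⟩ := h V
    have hex : ∃ N, V < g N := ⟨N0, hN0⟩
    set N := Nat.find hex with hNdef
    have hgN : V < g N := Nat.find_spec hex
    have hbig : ∀ m, m ≤ B + 1 → g m ≤ V := fun m hm =>
      Finset.le_sup' g (Finset.mem_range.mpr (by omega))
    have hNB : B + 2 ≤ N := by
      by_contra hc
      push_neg at hc
      exact absurd hgN (not_lt.mpr (hbig N (by omega)))
    refine ⟨N, by omega, by omega, fun m hm hmN => ?_⟩
    rcases eq_or_lt_of_le hmN with heq | hlt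
    · rw [heq]; exact (one_mul (g N)).ge
    · have hmin := Nat.find_min hex hlt
      push_neg at hmin
      linarith

variable {ι M : Type*} [Fintype ι] [DecidableEq ι] [MetricSpace M]

/-- The finset of lists of length `m`. -/
def TL (ι : Type*) [Fintype ι] [DecidableEq ι] (m : ℕ) : Finset (List ι) :=
  Finset.image List.ofFn (Finset.univ : Finset (Fin m → ι))

lemma mem_TL {m : ℕ} {l : List ι} : l ∈ TL ι m ↔ l.length = m := by
  unfold TL
  constructor
  · intro hl
    rw [Finset.mem_image] at hl
    obtain ⟨f, -, rfl⟩ := hl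
    exact List.length_ofFn
  · intro hl
    subst hl
    rw [Finset.mem_image]
    exact ⟨l.get, Finset.mem_univ _, List.ofFn_get l⟩

lemma presSum_eq (X : List ι → Set M) (t : ℝ) (m : ℕ) :
    Moran.presSum X t m = ∑ l ∈ TL ι m, diam (X l) ^ t := by
  unfold Moran.presSum TL
  rw [Finset.sum_image]
  intro f _ g _ h
  exact List.ofFn_inj.mp h

lemma ne_nil_of_mem_TL {m : ℕ} {l : List ι} (hm : 1 ≤ m) (hl : l ∈ TL ι m) : l ≠ [] := by
  rw [mem_TL] at hl
  intro h
  rw [h] at hl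
  simp at hl
  omega


lemma psi_nonneg (X : List ι → Set M) (t : ℝ) (i : List ι) : 0 ≤ diam (X i) ^ t :=
  Real.rpow_nonneg diam_nonneg t

lemma psi_submult (W : Moran.WCMC ι M) {t : ℝ} (ht : 0 ≤ t) {i j : List ι}
    (hi : i ≠ []) (hj : j ≠ []) :
    diam (W.X (i ++ j)) ^ t ≤ W.D ^ t * (diam (W.X i) ^ t * diam (W.X j) ^ t) := by
  have hD : (0:ℝ) ≤ W.D := le_trans zero_le_one W.one_le_D
  have h1 : diam (W.X (i ++ j)) ^ t ≤ (W.D * diam (W.X i) * diam (W.X j)) ^ t :=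
    Real.rpow_le_rpow diam_nonneg (W.submult i j hi hj) ht
  calc diam (W.X (i ++ j)) ^ t ≤ (W.D * diam (W.X i) * diam (W.X j)) ^ t := h1
    _ = W.D ^ t * (diam (W.X i) ^ t * diam (W.X j) ^ t) := by
        rw [Real.mul_rpow (by positivity) diam_nonneg,
          Real.mul_rpow hD diam_nonneg, mul_assoc]

lemma presSum_pos [Nonempty ι] (W : Moran.WCMC ι M) (t : ℝ) {m : ℕ} (hm : 1 ≤ m) :
    0 < Moran.presSum W.X t m := by
  unfold Moran.presSum
  apply Finset.sum_pos
  · intro f _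
    apply Real.rpow_pos_of_pos
    apply W.diam_pos
    intro h
    have := congrArg List.length h
    simp at this
    omega
  · exact Finset.univ_nonempty

lemma sum_split (W : Moran.WCMC ι M) {t : ℝ} (ht : 0 ≤ t) {a b : ℕ}
    (ha : 1 ≤ a) (hb : 1 ≤ b) :
    Moran.presSum W.X t (a + b) ≤
      W.D ^ t * Moran.presSum W.X t a * Moran.presSum W.X t b := by
  rw [presSum_eq, presSum_eq, presSum_eq]
  calc ∑ l ∈ TL ι (a + b), diam (W.X l) ^ t
      ≤ ∑ l ∈ TL ι (a + b),
          W.D ^ t * (diam (W.X (l.take a)) ^ t * diam (W.X (l.drop a)) ^ t) := by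
        apply Finset.sum_le_sum
        intro l hl
        have hlen : l.length = a + b := mem_TL.mp hl
        have h1 : l.take a ≠ [] := by
          intro h
          have := congrArg List.length h
          simp [hlen] at this
          omega
        have h2 : l.drop a ≠ [] := by
          intro h
          have := congrArg List.length h
          simp [hlen] at this
          omega
        calc diam (W.X l) ^ t = diam (W.X (l.take a ++ l.drop a)) ^ t := by
              rw [List.take_append_drop]
          _ ≤ W.D ^ t * (diam (W.X (l.take a)) ^ t * diam (W.X (l.drop a)) ^ t) :=
              psi_submult W ht h1 h2
    _ = ∑ p ∈ (TL ι a) ×ˢ (TL ι b),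
          W.D ^ t * (diam (W.X p.1) ^ t * diam (W.X p.2) ^ t) := by
        apply Finset.sum_nbij' (fun l => (l.take a, l.drop a)) (fun p => p.1 ++ p.2)
        · intro l hl
          have hlen : l.length = a + b := mem_TL.mp hl
          rw [Finset.mem_product]
          refine ⟨mem_TL.mpr ?_, mem_TL.mpr ?_⟩ <;> simp [hlen]
        · intro p hp
          rw [Finset.mem_product] at hp
          rw [mem_TL]
          simp [mem_TL.mp hp.1, mem_TL.mp hp.2]
        · intro l hl
          exact List.take_append_drop a l
        · intro p hp
          rw [Finset.mem_product] at hp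
          have h1 : p.1.length = a := mem_TL.mp hp.1
          simp [List.take_left', List.drop_left', h1]
        · intro l hl
          rfl
    _ = W.D ^ t * (∑ l ∈ TL ι a, diam (W.X l) ^ t) * (∑ l ∈ TL ι b, diam (W.X l) ^ t) := by
        rw [Finset.sum_product, mul_assoc, Finset.sum_mul_sum, Finset.mul_sum]
        exact Finset.sum_congr rfl fun x _ => by rw [Finset.mul_sum]


lemma one_le_g [Nonempty ι] (W : Moran.WCMC ι M) {P : ℝ → ℝ}
    (hP : Moran.IsPressure W.X P) {t : ℝ} (ht : 0 ≤ t) (hPt : 0 ≤ P t)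
    {m : ℕ} (hm : 1 ≤ m) : 1 ≤ W.D ^ t * Moran.presSum W.X t m := by
  set g : ℕ → ℝ := fun n => W.D ^ t * Moran.presSum W.X t n with hg
  have hDpos : (0:ℝ) < W.D ^ t := Real.rpow_pos_of_pos (lt_of_lt_of_le zero_lt_one W.one_le_D) t
  have hgpos : ∀ n, 1 ≤ n → 0 < g n := fun n hn => mul_pos hDpos (presSum_pos W t hn)
  have hsub : ∀ a b, 1 ≤ a → 1 ≤ b → g (a + b) ≤ g a * g b := by
    intro a b ha hb
    have := sum_split W ht ha hb
    have h2 := mul_le_mul_of_nonneg_left this hDpos.le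
    calc g (a + b) = W.D ^ t * Moran.presSum W.X t (a + b) := rfl
      _ ≤ W.D ^ t * (W.D ^ t * Moran.presSum W.X t a * Moran.presSum W.X t b) := h2
      _ = g a * g b := by ring
  have hpow : ∀ k, 1 ≤ k → g (k * m) ≤ g m ^ k := by
    intro k hk
    induction k with
    | zero => omega
    | succ n ih =>
      rcases Nat.eq_or_lt_of_le hk with h1 | h1
      · simp [← h1]
      · have hn : 1 ≤ n := by omega
        have hnm : 1 ≤ n * m := Nat.one_le_iff_ne_zero.mpr (by positivity)
        calc g ((n + 1) * m) = g (n * m + m) := by ring_nf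
          _ ≤ g (n * m) * g m := hsub _ _ hnm hm
          _ ≤ g m ^ n * g m := by
              exact mul_le_mul_of_nonneg_right (ih hn) (hgpos m hm).le
          _ = g m ^ (n + 1) := by ring
  -- the sequence v n = (1/n) log (g n) tends to P t
  have hv : Tendsto (fun n : ℕ => (1 / (n:ℝ)) * Real.log (g n)) atTop (𝓝 (P t)) := by
    have h0 : Tendsto (fun n : ℕ => (1 / (n:ℝ)) * Real.log (W.D ^ t)) atTop (𝓝 0) := by
      have := tendsto_one_div_atTop_nhds_zero_nat.mul_const (Real.log (W.D ^ t))
      simpa using this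
    have hsum := h0.add (hP t ht)
    rw [zero_add] at hsum
    apply hsum.congr'
    filter_upwards [eventually_ge_atTop 1] with n hn
    have hps : Moran.presSum W.X t n ≠ 0 := (presSum_pos W t hn).ne'
    rw [hg]
    rw [Real.log_mul hDpos.ne' hps]
    ring
  have hPle : P t ≤ (1 / (m:ℝ)) * Real.log (g m) := by
    have hcomp : Tendsto (fun k : ℕ => k * m) atTop atTop := by
      apply tendsto_atTop_atTop_of_monotone (fun x y h => Nat.mul_le_mul_right m h)
      intro c
      exact ⟨c, Nat.le_mul_of_pos_right c (by omega)⟩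
    have hv2 : Tendsto (fun k : ℕ => (1 / ((k * m : ℕ):ℝ)) * Real.log (g (k * m)))
        atTop (𝓝 (P t)) := hv.comp hcomp
    apply le_of_tendsto hv2
    filter_upwards [eventually_ge_atTop 1] with k hk
    have hkm : 1 ≤ k * m := Nat.one_le_iff_ne_zero.mpr (by positivity)
    have hlog : Real.log (g (k * m)) ≤ (k:ℝ) * Real.log (g m) := by
      calc Real.log (g (k * m)) ≤ Real.log (g m ^ k) :=
            Real.log_le_log (hgpos _ hkm) (hpow k hk)
        _ = (k:ℝ) * Real.log (g m) := by rw [Real.log_pow]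
    have hpos : (0:ℝ) < ((k * m : ℕ):ℝ) := by
      push_cast
      have : (1:ℝ) ≤ (k:ℝ) := by exact_mod_cast hk
      have : (1:ℝ) ≤ (m:ℝ) := by exact_mod_cast hm
      nlinarith
    calc (1 / ((k * m : ℕ):ℝ)) * Real.log (g (k * m))
        ≤ (1 / ((k * m : ℕ):ℝ)) * ((k:ℝ) * Real.log (g m)) := by
          exact mul_le_mul_of_nonneg_left hlog (by positivity)
      _ = (1 / (m:ℝ)) * Real.log (g m) := by
          have hk0 : (k:ℝ) ≠ 0 := by positivity
          have hm0 : (m:ℝ) ≠ 0 := by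
            have : (1:ℝ) ≤ (m:ℝ) := by exact_mod_cast hm
            linarith
          push_cast
          field_simp
  have hlogpos : 0 ≤ Real.log (g m) := by
    by_contra h
    push_neg at h
    have h1 : (0:ℝ) < 1 / (m:ℝ) := by
      have : (1:ℝ) ≤ (m:ℝ) := by exact_mod_cast hm
      positivity
    nlinarith
  by_contra h
  push_neg at h
  have := Real.log_neg (hgpos m hm) h
  linarith


lemma cover_bound (W : Moran.WCMC ι M) {t : ℝ} (ht : 0 ≤ t)
    (F : Finset (List ι)) {N : ℕ}
    (hcov : ∀ l : List ι, l.length = N → ∃ i ∈ F, i <+: l ∧ i.length < N ∧ i ≠ []) :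
    Moran.presSum W.X t N ≤
      ∑ i ∈ F, (W.D ^ t * diam (W.X i) ^ t) * Moran.presSum W.X t (N - i.length) := by
  classical
  set p : List ι → List ι := fun l =>
    if h : ∃ i ∈ F, i <+: l ∧ i.length < N ∧ i ≠ [] then h.choose else [] with hpdef
  have hp : ∀ l ∈ TL ι N, p l ∈ F ∧ p l <+: l ∧ (p l).length < N ∧ p l ≠ [] := by
    intro l hl
    have hl' := mem_TL.mp hl
    have h := hcov l hl'
    rw [hpdef]
    simp only [dif_pos h]
    exact ⟨h.choose_spec.1, h.choose_spec.2⟩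
  rw [presSum_eq]
  rw [← Finset.sum_fiberwise_of_maps_to (g := p) (t := F) (fun l hl => (hp l hl).1)]
  apply Finset.sum_le_sum
  intro i hi
  by_cases hne : ((TL ι N).filter (fun l => p l = i)).Nonempty
  swap
  · rw [Finset.not_nonempty_iff_eq_empty] at hne
    rw [hne, Finset.sum_empty]
    have h1 : (0:ℝ) ≤ W.D ^ t * diam (W.X i) ^ t := by
      have : (0:ℝ) < W.D := lt_of_lt_of_le zero_lt_one W.one_le_D
      positivity
    have h2 : (0:ℝ) ≤ Moran.presSum W.X t (N - i.length) := by
      rw [presSum_eq]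
      exact Finset.sum_nonneg fun l _ => psi_nonneg W.X t l
    positivity
  obtain ⟨l0, hl0⟩ := hne
  rw [Finset.mem_filter] at hl0
  have hi' : i ∈ F ∧ i <+: l0 ∧ i.length < N ∧ i ≠ [] := hl0.2 ▸ hp l0 hl0.1
  calc ∑ l ∈ (TL ι N).filter (fun l => p l = i), diam (W.X l) ^ t
      ≤ ∑ l ∈ (TL ι N).filter (fun l => p l = i),
          (W.D ^ t * diam (W.X i) ^ t) * diam (W.X (l.drop i.length)) ^ t := by
        apply Finset.sum_le_sum
        intro l hl
        rw [Finset.mem_filter] at hl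
        obtain ⟨hmem, hpl⟩ := hl
        have hpp := hp l hmem
        rw [hpl] at hpp
        have hpre : i ++ l.drop i.length = l := by
          have := List.prefix_iff_eq_take.mp hpp.2.1
          conv_rhs => rw [← List.take_append_drop i.length l]
          rw [← this]
        have hdropne : l.drop i.length ≠ [] := by
          intro h
          have h1 := congrArg List.length h
          have h2 := mem_TL.mp hmem
          simp [h2] at h1
          omega
        calc diam (W.X l) ^ t = diam (W.X (i ++ l.drop i.length)) ^ t := by rw [hpre]
          _ ≤ W.D ^ t * (diam (W.X i) ^ t * diam (W.X (l.drop i.length)) ^ t) :=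
              psi_submult W ht hpp.2.2.2 hdropne
          _ = (W.D ^ t * diam (W.X i) ^ t) * diam (W.X (l.drop i.length)) ^ t := by ring
    _ = (W.D ^ t * diam (W.X i) ^ t) *
          ∑ l ∈ (TL ι N).filter (fun l => p l = i), diam (W.X (l.drop i.length)) ^ t := by
        rw [Finset.mul_sum]
    _ ≤ (W.D ^ t * diam (W.X i) ^ t) * Moran.presSum W.X t (N - i.length) := by
        apply mul_le_mul_of_nonneg_left _ (by
          have : (0:ℝ) < W.D := lt_of_lt_of_le zero_lt_one W.one_le_D
          positivity)
        rw [presSum_eq]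
        have hinj : ∀ l1 ∈ (TL ι N).filter (fun l => p l = i),
            ∀ l2 ∈ (TL ι N).filter (fun l => p l = i),
            l1.drop i.length = l2.drop i.length → l1 = l2 := by
          intro l1 h1 l2 h2 hd
          rw [Finset.mem_filter] at h1 h2
          have hp1 := hp l1 h1.1
          have hp2 := hp l2 h2.1
          rw [h1.2] at hp1
          rw [h2.2] at hp2
          have e1 : i ++ l1.drop i.length = l1 := by
            have := List.prefix_iff_eq_take.mp hp1.2.1
            conv_rhs => rw [← List.take_append_drop i.length l1]
            rw [← this]
          have e2 : i ++ l2.drop i.length = l2 := by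
            have := List.prefix_iff_eq_take.mp hp2.2.1
            conv_rhs => rw [← List.take_append_drop i.length l2]
            rw [← this]
          rw [← e1, ← e2, hd]
        have himg := Finset.sum_image (f := fun m => diam (W.X m) ^ t)
          (g := fun l => l.drop i.length) (s := (TL ι N).filter (fun l => p l = i)) hinj
        rw [← himg]
        apply Finset.sum_le_sum_of_subset_of_nonneg
        · intro m hm
          rw [Finset.mem_image] at hm
          obtain ⟨l, hl, rfl⟩ := hm
          rw [Finset.mem_filter] at hl
          rw [mem_TL]
          have := mem_TL.mp hl.1
          simp [this]
        · intro m _ _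
          exact psi_nonneg W.X t m


lemma pre_take {ι : Type*} (a0 : ι) (l : List ι) {m : ℕ} (hm : m ≤ l.length) :
    Moran.pre (fun k => l.getD k a0) m = l.take m := by
  apply List.ext_getElem
  · simp [Moran.pre]
    omega
  · intro k h1 h2
    have hkm : k < m := by simpa [Moran.pre] using h1
    have hkl : k < l.length := by omega
    rw [List.getElem_take]
    simp only [Moran.pre, List.getElem_ofFn]
    exact List.getD_eq_getElem l a0 hkl

lemma cylinder_isOpen {ι : Type*} [TopologicalSpace ι] [DiscreteTopology ι] (i : List ι) :
    IsOpen (Moran.cylinder i) := by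
  have heq : Moran.cylinder i = ⋂ k : Fin i.length, {j : ℕ → ι | j k.1 = i[k.1]} := by
    ext j
    simp only [Moran.cylinder, mem_setOf_eq, mem_iInter]
    constructor
    · intro h k
      have h2 := List.getElem_of_eq h.symm k.2
      rw [h2]
      unfold Moran.pre
      rw [List.getElem_ofFn]
    · intro h
      apply List.ext_getElem
      · simp [Moran.pre]
      · intro n h1 h2
        have hn : n < i.length := h2
        simp only [Moran.pre, List.getElem_ofFn]
        exact h ⟨n, hn⟩
  rw [heq]
  apply isOpen_iInter_of_finite
  intro k
  have : {j : ℕ → ι | j k.1 = i[k.1]} = (fun j : ℕ → ι => j k.1) ⁻¹' {i[k.1]} := rfl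
  rw [this]
  exact IsOpen.preimage (continuous_apply k.1) (isOpen_discrete _)

end Stmt4Aux

/-- Given a WCMC and any `t ≥ 0` with pressure `P(t) ≥ 0`, the set
function `M^t` satisfies `M^t(I^∞) > 0`. -/
theorem stmt4 {ι M : Type*} [Fintype ι] [MetricSpace M]
    (hcard : 2 ≤ Fintype.card ι) (W : Moran.WCMC ι M)
    (P : ℝ → ℝ) (hP : Moran.IsPressure W.X P)
    (t : ℝ) (ht : 0 ≤ t) (hPt : 0 ≤ P t) :
    0 < Moran.Mpsi (fun i : List ι => Metric.diam (W.X i) ^ t)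
      (Set.univ : Set (ℕ → ι)) := by
  classical
  have hne : Nonempty ι := Fintype.card_pos_iff.mp (by omega)
  obtain ⟨a0⟩ := hne
  haveI : Nonempty ι := ⟨a0⟩
  set ψ : List ι → ℝ := fun i => diam (W.X i) ^ t with hψ
  obtain ⟨K, hK1, hKrec⟩ := Stmt4Aux.record (fun n => W.D ^ t * Moran.presSum W.X t n)
    (fun m hm => Stmt4Aux.one_le_g W hP ht hPt hm)
  have hDpos : (0:ℝ) < W.D ^ t :=
    Real.rpow_pos_of_pos (lt_of_lt_of_le zero_lt_one W.one_le_D) t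
  set ε : ℝ := (K * W.D ^ t)⁻¹ with hε
  have hεpos : 0 < ε := by positivity
  have hMn : ENNReal.ofReal ε ≤ Moran.Mpsin ψ 0 univ := by
    unfold Moran.Mpsin
    refine le_iInf fun C => le_iInf fun hC => le_iInf fun hcov => ?_
    letI : TopologicalSpace ι := ⊥
    haveI : DiscreteTopology ι := ⟨rfl⟩
    have hcov' : (univ : Set (ℕ → ι)) ⊆ ⋃ i : C, Moran.cylinder (i : List ι) := by
      rw [Set.iUnion_coe_set]
      exact hcov
    obtain ⟨F, hF⟩ := isCompact_univ.elim_finite_subcover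
      (fun i : C => Moran.cylinder (i : List ι))
      (fun i => Stmt4Aux.cylinder_isOpen _) hcov'
    set F' : Finset (List ι) := F.image Subtype.val with hF'
    obtain ⟨N, hBN, hN1, hrec⟩ := hKrec (F'.sup List.length + 1)
    have hlen : ∀ i ∈ F', i.length < N := by
      intro i hi
      have := Finset.le_sup (f := List.length) hi
      omega
    have hlen1 : ∀ i ∈ F', 1 ≤ i.length := by
      intro i hi
      rw [hF', Finset.mem_image] at hi
      obtain ⟨x, hx, rfl⟩ := hi
      have := (hC x x.2).1
      cases h : (x : List ι) with
      | nil => exact absurd h this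
      | cons a l => simp [h]
    have hcb : ∀ l : List ι, l.length = N → ∃ i ∈ F', i <+: l ∧ i.length < N ∧ i ≠ [] := by
      intro l hl
      set j : ℕ → ι := fun k => l.getD k a0 with hj
      have hjm : j ∈ ⋃ i ∈ F, Moran.cylinder ((i : C) : List ι) := hF (mem_univ j)
      rw [mem_iUnion₂] at hjm
      obtain ⟨i, hiF, hji⟩ := hjm
      have hiF' : (i : List ι) ∈ F' := Finset.mem_image.mpr ⟨i, hiF, rfl⟩
      have hlt : (i : List ι).length < N := hlen _ hiF'
      have hji' : Moran.pre j (i : List ι).length = (i : List ι) := hji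
      have hpre : Moran.pre j (i : List ι).length = l.take (i : List ι).length :=
        Stmt4Aux.pre_take a0 l (by omega)
      refine ⟨i, hiF', ?_, hlt, (hC i i.2).1⟩
      rw [← hji', hpre]
      exact List.take_prefix _ _
    have hkey := Stmt4Aux.cover_bound W ht F' hcb
    have hgN : 1 ≤ W.D ^ t * Moran.presSum W.X t N :=
      Stmt4Aux.one_le_g W hP ht hPt hN1
    have hsum : Moran.presSum W.X t N ≤
        (∑ i ∈ F', ψ i) * (K * (W.D ^ t * Moran.presSum W.X t N)) := by
      calc Moran.presSum W.X t N ≤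
          ∑ i ∈ F', (W.D ^ t * ψ i) * Moran.presSum W.X t (N - i.length) := hkey
        _ ≤ ∑ i ∈ F', ψ i * (K * (W.D ^ t * Moran.presSum W.X t N)) := by
            apply Finset.sum_le_sum
            intro i hi
            have h1 : 1 ≤ N - i.length := by
              have := hlen i hi
              have := hlen1 i hi
              omega
            have h2 : N - i.length ≤ N := by omega
            have h3 := hrec (N - i.length) h1 h2
            have hψn : 0 ≤ ψ i := Stmt4Aux.psi_nonneg W.X t i
            calc (W.D ^ t * ψ i) * Moran.presSum W.X t (N - i.length)
                = ψ i * (W.D ^ t * Moran.presSum W.X t (N - i.length)) := by ring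
              _ ≤ ψ i * (K * (W.D ^ t * Moran.presSum W.X t N)) :=
                  mul_le_mul_of_nonneg_left h3 hψn
        _ = (∑ i ∈ F', ψ i) * (K * (W.D ^ t * Moran.presSum W.X t N)) := by
            rw [← Finset.sum_mul]
    have hPpos : 0 < Moran.presSum W.X t N := Stmt4Aux.presSum_pos W t hN1
    have hεle : ε ≤ ∑ i ∈ F', ψ i := by
      have hKD : (0:ℝ) < K * W.D ^ t := by positivity
      rw [hε, inv_le_iff_one_le_mul₀ hKD]
      have h5 : 1 * Moran.presSum W.X t N ≤
          ((∑ i ∈ F', ψ i) * (K * W.D ^ t)) * Moran.presSum W.X t N := by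
        calc 1 * Moran.presSum W.X t N = Moran.presSum W.X t N := one_mul _
          _ ≤ (∑ i ∈ F', ψ i) * (K * (W.D ^ t * Moran.presSum W.X t N)) := hsum
          _ = ((∑ i ∈ F', ψ i) * (K * W.D ^ t)) * Moran.presSum W.X t N := by ring
      exact le_of_mul_le_mul_right (by simpa using h5) hPpos
    calc ENNReal.ofReal ε ≤ ENNReal.ofReal (∑ i ∈ F', ψ i) :=
        ENNReal.ofReal_le_ofReal hεle
      _ = ∑ i ∈ F', ENNReal.ofReal (ψ i) :=
        ENNReal.ofReal_sum_of_nonneg fun i _ => Stmt4Aux.psi_nonneg W.X t i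
      _ = ∑ i ∈ F, ENNReal.ofReal (ψ (i : List ι)) := by
        rw [hF']
        exact Finset.sum_image fun x _ y _ h => Subtype.ext h
      _ ≤ ∑' i : C, ENNReal.ofReal (ψ (i : List ι)) := ENNReal.sum_le_tsum F
  have hfin : ENNReal.ofReal ε ≤ Moran.Mpsi ψ univ :=
    le_trans hMn (le_iSup (fun n => Moran.Mpsin ψ n univ) 0)
  calc (0:ℝ≥0∞) < ENNReal.ofReal ε := ENNReal.ofReal_pos.mpr hεpos
    _ ≤ _ := hfin
end

section
/- Suppose we have a weakly controlled Moran construction in M and let c, r_0 > 0 and α_1 > 0 be constants. Assume that for every x ∈ M, every 0 < r < R < r_0, and every maximal r-packing {B(y,r) : y ∈ H} of B(x,R) we have #H < c·(R/r)^{α_1}. Then the ball condition implies the finite clustering property. -/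
open Metric Set Filter MeasureTheory Topology
open scoped ENNReal ENat

/-- If every maximal `r`-packing of a ball `B(x,R)` (for
`0 < r < R < r₀`) has cardinality less than `c·(R/r)^{α₁}`, then for a WCMC in `M`
the ball condition implies the finite clustering property. -/
theorem stmt8 {ι M : Type*} [Fintype ι] [MetricSpace M]
    (hcard : 2 ≤ Fintype.card ι) (W : Moran.WCMC ι M)
    (c r₀ α₁ : ℝ) (hc : 0 < c) (hr₀ : 0 < r₀) (hα₁ : 0 < α₁)
    (hpack : ∀ (x : M) (r R : ℝ), 0 < r → r < R → R < r₀ →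
      ∀ H : Set M, H ⊆ Metric.ball x R →
        (H.Pairwise fun y z => Disjoint (Metric.ball y r) (Metric.ball z r)) →
        Metric.ball x R ⊆ ⋃ y ∈ H, Metric.ball y (2 * r) →
        (H.encard : ℝ≥0∞) < ENNReal.ofReal (c * (R / r) ^ α₁)) :
    Moran.BallCond W.X → Moran.FCP W.X := by
  rintro ⟨δ, hδ0, hδ1, hball⟩
  refine ⟨⌈c * (4 / δ) ^ α₁⌉₊, fun x hx => ?_⟩
  set K : ℕ := ⌈c * (4 / δ) ^ α₁⌉₊ with hK
  obtain ⟨rx, hrx, hcond⟩ := hball x hx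
  have key : ∀ r : ℝ, 0 < r → r < rx → r < r₀ / 4 →
      (Moran.Zx W.X x r).encard ≤ (K : ℕ∞) := by
    intro r hr hrrx hrr0
    obtain ⟨cc, hcc, hpair⟩ := hcond r hr hrrx
    set Z := Moran.Zx W.X x r with hZ
    -- each cc i lies in ball x (4r)
    have hdr : 0 < δ * r := mul_pos hδ0 hr
    have hmemball : ∀ i ∈ Z, cc i ∈ Metric.ball x (4 * r) := by
      intro i hi
      obtain ⟨q, hqX, hqb⟩ := hi.2
      have hne : (W.X i).Nonempty := ⟨q, hqX⟩
      have := hcc i hi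
      obtain ⟨p, hpX, hpd⟩ := (Metric.infDist_lt_iff hne).mp this
      have hbd : Bornology.IsBounded (W.X i) := (W.compact i hi.1.1).isBounded
      have hdiam : dist p q ≤ r :=
        le_trans (Metric.dist_le_diam_of_mem hbd hpX hqX) hi.1.2.1
      have : dist (cc i) x ≤ dist (cc i) p + dist p q + dist q x :=
        dist_triangle4 _ _ _ _
      have hqx : dist q x < r := Metric.mem_ball.mp hqb
      have : dist (cc i) x < 4 * r := by linarith
      exact Metric.mem_ball.mpr this
    -- cc is injective on Z
    have hinj : Set.InjOn cc Z := by
      intro i hi j hj hij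
      by_contra hne
      have hd : Disjoint (Metric.ball (cc i) (δ * r)) (Metric.ball (cc j) (δ * r)) :=
        hpair hi hj hne
      rw [hij] at hd
      exact (Set.not_nonempty_empty) (by
        have : cc j ∈ Metric.ball (cc j) (δ * r) := Metric.mem_ball_self hdr
        have := hd.inter_eq ▸ (Set.mem_inter this this)
        exact ⟨_, this⟩)
    -- extend cc '' Z to a maximal packing via Zorn
    set S : Set (Set M) := {H | H ⊆ Metric.ball x (4 * r) ∧
      H.Pairwise fun y z => Disjoint (Metric.ball y (δ * r)) (Metric.ball z (δ * r))}
      with hS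
    have hbase : cc '' Z ∈ S := by
      constructor
      · rintro _ ⟨i, hi, rfl⟩; exact hmemball i hi
      · rintro _ ⟨i, hi, rfl⟩ _ ⟨j, hj, rfl⟩ hne
        exact hpair hi hj (fun h => hne (by rw [h]))
    obtain ⟨m, hsub, hmax⟩ := zorn_subset_nonempty S
      (fun ch hchS hchain hchne => by
        refine ⟨⋃₀ ch, ⟨?_, ?_⟩, fun s hs => Set.subset_sUnion_of_mem hs⟩
        · intro y hy
          obtain ⟨s, hs, hys⟩ := hy
          exact (hchS hs).1 hys
        · intro y hy z hz hne
          obtain ⟨s, hs, hys⟩ := hy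
          obtain ⟨t, ht, hzt⟩ := hz
          rcases hchain.total hs ht with h | h
          · exact (hchS ht).2 (h hys) hzt hne
          · exact (hchS hs).2 hys (h hzt) hne) (cc '' Z) hbase
    -- maximality gives the covering property
    have hcover : Metric.ball x (4 * r) ⊆ ⋃ y ∈ m, Metric.ball y (2 * (δ * r)) := by
      intro y hy
      by_contra hyn
      have hfar : ∀ z ∈ m, 2 * (δ * r) ≤ dist y z := by
        intro z hz
        by_contra hlt
        push_neg at hlt
        exact hyn (Set.mem_biUnion hz (Metric.mem_ball.mpr hlt))
      have hym : y ∉ m := fun hym => hyn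
        (Set.mem_biUnion hym (Metric.mem_ball_self (by linarith)))
      have hins : insert y m ∈ S := by
        constructor
        · exact Set.insert_subset hy hmax.1.1
        · haveI : Std.Symm (fun y z : M => Disjoint (Metric.ball y (δ * r)) (Metric.ball z (δ * r))) :=
            ⟨fun a b h => h.symm⟩
          rw [Set.pairwise_insert_of_symm]
          refine ⟨hmax.1.2, fun z hz _ => ?_⟩
          exact Metric.ball_disjoint_ball (by have := hfar z hz; linarith)
      have := hmax.2 hins (Set.subset_insert y m)
      exact hym (this (Set.mem_insert y m))
    -- apply the packing bound
    have h4r : 4 * r < r₀ := by linarith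
    have hlt : δ * r < 4 * r := by nlinarith
    have hbound := hpack x (δ * r) (4 * r) hdr hlt h4r m hmax.1.1 hmax.1.2 hcover
    have hratio : (4 * r) / (δ * r) = 4 / δ := by
      rw [mul_div_mul_right _ _ (ne_of_gt hr)]
    rw [hratio] at hbound
    have hKle : ENNReal.ofReal (c * (4 / δ) ^ α₁) ≤ ((K : ℕ∞) : ℝ≥0∞) := by
      have h1 : c * (4 / δ) ^ α₁ ≤ (K : ℝ) := Nat.le_ceil _
      calc ENNReal.ofReal (c * (4 / δ) ^ α₁) ≤ ENNReal.ofReal (K : ℝ) :=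
            ENNReal.ofReal_le_ofReal h1
        _ = ((K : ℕ∞) : ℝ≥0∞) := by simp
    rw [← ENat.toENNReal_le]
    calc ((Z.encard : ℕ∞) : ℝ≥0∞) = ((cc '' Z).encard : ℝ≥0∞) := by
          rw [hinj.encard_image]
      _ ≤ (m.encard : ℝ≥0∞) := by
          rw [ENat.toENNReal_le]; exact Set.encard_mono hsub
      _ ≤ ENNReal.ofReal (c * (4 / δ) ^ α₁) := le_of_lt hbound
      _ ≤ ((K : ℕ∞) : ℝ≥0∞) := hKle
  have hev : ∀ᶠ r in 𝓝[>] (0 : ℝ), (Moran.Zx W.X x r).encard ≤ (K : ℕ∞) := by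
    have hmem : Set.Ioo (0 : ℝ) (min rx (r₀ / 4)) ∈ 𝓝[>] (0 : ℝ) :=
      Ioo_mem_nhdsGT_of_mem ⟨le_refl 0, lt_min hrx (by linarith)⟩
    filter_upwards [hmem] with r hr
    exact key r hr.1 (lt_of_lt_of_le hr.2 (min_le_left _ _))
      (lt_of_lt_of_le hr.2 (min_le_right _ _))
  exact Filter.limsup_le_of_le (by isBoundedDefault) hev
end

section
/- Suppose we have a weakly controlled Moran construction in M and let c, r_0 > 0 and α_2 > 0 be constants. Assume that for every x ∈ M, every 0 < r < R < r_0, and every maximal r-packing {B(y,r) : y ∈ H} of B(x,R) we have #H > c^{-1}·(R/r)^{α_2}. Then the finite clustering property implies the ball condition. -/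
open Metric Set Filter MeasureTheory Topology
open scoped ENNReal ENat

/-- Maximal packings exist: in any metric space, any set `B` admits a subset `H`
whose `ρ`-balls are pairwise disjoint and whose `2ρ`-balls cover `B`. -/
lemma exists_maximal_packing {M : Type*} [MetricSpace M] (B : Set M) {ρ : ℝ} (hρ : 0 < ρ) :
    ∃ H ⊆ B, (H.Pairwise fun y z => Disjoint (Metric.ball y ρ) (Metric.ball z ρ)) ∧
      B ⊆ ⋃ y ∈ H, Metric.ball y (2 * ρ) := by
  set S : Set (Set M) :=
    {H | H ⊆ B ∧ H.Pairwise fun y z => Disjoint (Metric.ball y ρ) (Metric.ball z ρ)} with hS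
  have hchainH : ∀ c ⊆ S, IsChain (· ⊆ ·) c → c.Nonempty → ∃ ub ∈ S, ∀ s ∈ c, s ⊆ ub := by
    intro c hcS hchain _
    refine ⟨⋃₀ c, ⟨?_, ?_⟩, fun s hs => subset_sUnion_of_mem hs⟩
    · exact sUnion_subset fun s hs => (hcS hs).1
    · intro y hy z hz hne
      obtain ⟨s₁, hs₁, hy₁⟩ := hy
      obtain ⟨s₂, hs₂, hz₂⟩ := hz
      rcases hchain.total hs₁ hs₂ with h | h
      · exact (hcS hs₂).2 (h hy₁) hz₂ hne
      · exact (hcS hs₁).2 hy₁ (h hz₂) hne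
  obtain ⟨H, -, hHS, hmax⟩ :=
    zorn_subset_nonempty S hchainH ∅ ⟨empty_subset _, Set.pairwise_empty _⟩
  refine ⟨H, hHS.1, hHS.2, ?_⟩
  intro w hw
  by_contra hcov
  have hdist : ∀ y ∈ H, 2 * ρ ≤ dist w y := by
    intro y hy
    by_contra hlt
    exact hcov (Set.mem_biUnion hy (Metric.mem_ball.mpr (lt_of_not_ge hlt)))
  have hwH : w ∉ H := by
    intro hwH
    have := hdist w hwH
    simp only [dist_self] at this
    linarith
  have hins : insert w H ∈ S := by
    constructor
    · exact Set.insert_subset hw hHS.1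
    · refine (haveI : Std.Symm (fun y z : M => Disjoint (Metric.ball y ρ) (Metric.ball z ρ)) := ⟨fun a b h => h.symm⟩; Set.pairwise_insert_of_symm) |>.mpr ⟨hHS.2, ?_⟩
      intro z hz _
      exact Metric.ball_disjoint_ball (by linarith [hdist z hz])
  exact hwH (hmax hins (Set.subset_insert w H) (Set.mem_insert w H))

/-- A system of distinct representatives: if each of finitely many sets has at
least as many elements as the number of sets, an injective choice exists. -/
lemma exists_sdr {A M : Type*} [Nonempty M] (Z : Finset A) (Hc : A → Set M)
    (h : ∀ i ∈ Z, (Z.card : ℕ∞) ≤ (Hc i).encard) :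
    ∃ f : A → M, (∀ i ∈ Z, f i ∈ Hc i) ∧ Set.InjOn f (Z : Set A) := by
  classical
  induction Z using Finset.induction generalizing Hc with
  | empty => exact ⟨fun _ => Classical.arbitrary M, by simp, by simp⟩
  | @insert a s ha ih =>
    have hcard : (insert a s).card = s.card + 1 := Finset.card_insert_of_notMem ha
    have hane : (Hc a).Nonempty := by
      rw [← Set.one_le_encard_iff_nonempty]
      refine le_trans ?_ (h a (Finset.mem_insert_self a s))
      rw [hcard]; exact_mod_cast Nat.one_le_iff_ne_zero.mpr (Nat.succ_ne_zero _)
    obtain ⟨v, hv⟩ := hane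
    have hsub : ∀ i ∈ s, (s.card : ℕ∞) ≤ (Hc i \ {v}).encard := by
      intro i hi
      by_cases hvi : v ∈ Hc i
      · have hkey : (Hc i \ {v}).encard + 1 = (Hc i).encard :=
          Set.encard_diff_singleton_add_one hvi
        have h1 : ((s.card : ℕ∞) + 1) ≤ (Hc i \ {v}).encard + 1 := by
          rw [hkey]
          have := h i (Finset.mem_insert_of_mem hi)
          rw [hcard] at this
          exact_mod_cast this
        exact (ENat.add_le_add_iff_right (by simp)).mp h1
      · rw [Set.diff_singleton_eq_self hvi]
        refine le_trans ?_ (h i (Finset.mem_insert_of_mem hi))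
        rw [hcard]
        exact_mod_cast Nat.le_succ _
    obtain ⟨f, hf, hinj⟩ := ih (fun i => Hc i \ {v}) hsub
    refine ⟨Function.update f a v, ?_, ?_⟩
    · intro i hi0
      rcases Finset.mem_insert.mp hi0 with rfl | hi
      · simp [hv]
      · have hia : i ≠ a := by rintro rfl; exact ha hi
        rw [Function.update_of_ne hia]
        exact (hf i hi).1
    · intro i hi0 j hj0 hij
      simp only [Finset.coe_insert, Set.mem_insert_iff, Finset.mem_coe] at hi0 hj0
      rcases hi0 with rfl | hi <;> rcases hj0 with rfl | hj
      · rfl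
      · exfalso
        rw [Function.update_self, Function.update_of_ne (by rintro rfl; exact ha hj)] at hij
        exact (hf j hj).2 (by simp [← hij])
      · exfalso
        rw [Function.update_self, Function.update_of_ne (by rintro rfl; exact ha hi)] at hij
        exact (hf i hi).2 (by simp [hij])
      · rw [Function.update_of_ne (by rintro rfl; exact ha hi),
          Function.update_of_ne (by rintro rfl; exact ha hj)] at hij
        exact hinj hi hj hij

/-- If every maximal `r`-packing of a ball `B(x,R)` (for
`0 < r < R < r₀`) has cardinality greater than `c⁻¹·(R/r)^{α₂}`, then for a WCMC
in `M` the finite clustering property implies the ball condition. -/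
theorem stmt9 {ι M : Type*} [Fintype ι] [MetricSpace M]
    (hcard : 2 ≤ Fintype.card ι) (W : Moran.WCMC ι M)
    (c r₀ α₂ : ℝ) (hc : 0 < c) (hr₀ : 0 < r₀) (hα₂ : 0 < α₂)
    (hpack : ∀ (x : M) (r R : ℝ), 0 < r → r < R → R < r₀ →
      ∀ H : Set M, H ⊆ Metric.ball x R →
        (H.Pairwise fun y z => Disjoint (Metric.ball y r) (Metric.ball z r)) →
        Metric.ball x R ⊆ ⋃ y ∈ H, Metric.ball y (2 * r) →
        ENNReal.ofReal (c⁻¹ * (R / r) ^ α₂) < (H.encard : ℝ≥0∞)) :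
    Moran.FCP W.X → Moran.BallCond W.X := by
  classical
  intro hFCP
  obtain ⟨K, hK⟩ := hFCP
  set t₀ : ℝ := (c * K) ^ (1/α₂) with ht₀
  set t : ℝ := max t₀ 1 with ht
  have ht1 : (1:ℝ) ≤ t := le_max_right _ _
  set δ : ℝ := 1 / (4*(t+1)) with hδ
  have hδpos : 0 < δ := by rw [hδ]; positivity
  have hδkey : δ * (4*(t+1)) = 1 := by rw [hδ]; field_simp
  have hδ8 : δ ≤ 1/8 := by
    rw [hδ, div_le_div_iff₀ (by positivity) (by norm_num)]; linarith
  refine ⟨δ, hδpos, by linarith, ?_⟩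
  intro x hx
  -- From FCP, eventually #Z(x,r) ≤ K
  have hev : ∀ᶠ r in 𝓝[>] (0:ℝ), (Moran.Zx W.X x r).encard ≤ (K:ℕ∞) := by
    by_contra hcon
    rw [Filter.not_eventually] at hcon
    have hfreq : ∃ᶠ r in 𝓝[>] (0:ℝ), ((K:ℕ∞)+1) ≤ (Moran.Zx W.X x r).encard :=
      hcon.mono fun r hr => (ENat.add_one_le_iff (by simp)).mpr (lt_of_not_ge hr)
    have h1 := Filter.le_limsup_of_frequently_le' hfreq
    have h2 := hK x hx
    exact absurd ((ENat.add_one_le_iff (by simp)).mp (le_trans h1 h2)) (lt_irrefl _)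
  rw [eventually_nhdsWithin_iff, Metric.eventually_nhds_iff] at hev
  obtain ⟨ε, hε, hevε⟩ := hev
  refine ⟨min ε r₀, lt_min hε hr₀, ?_⟩
  intro r hr hrlt
  have hrε : r < ε := lt_of_lt_of_le hrlt (min_le_left _ _)
  have hrr₀ : r < r₀ := lt_of_lt_of_le hrlt (min_le_right _ _)
  have hZle : (Moran.Zx W.X x r).encard ≤ (K:ℕ∞) := by
    refine hevε ?_ (Set.mem_Ioi.mpr hr)
    rw [Real.dist_eq, sub_zero, abs_of_pos hr]; exact hrε
  have hZfin : (Moran.Zx W.X x r).Finite :=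
    Set.encard_lt_top_iff.mp (lt_of_le_of_lt hZle (WithTop.coe_lt_top K))
  set Zs : Finset (List ι) := hZfin.toFinset with hZs
  have hcardZ : (Zs.card : ℕ∞) ≤ (K:ℕ∞) := by
    rw [← hZfin.encard_eq_coe_toFinset_card]; exact hZle
  -- a maximal (δr)-packing of B(x,3r)
  obtain ⟨H, hHsub, hHdisj, hHcov⟩ :=
    exists_maximal_packing (Metric.ball x (3*r)) (mul_pos hδpos hr)
  -- witness points z i ∈ X i ∩ B(x,r)
  set z : List ι → M :=
    fun i => if h : (W.X i ∩ Metric.ball x r).Nonempty then h.choose else x with hzdef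
  have hzmem : ∀ i ∈ Moran.Zx W.X x r, z i ∈ W.X i ∩ Metric.ball x r := by
    intro i hi
    have h2 : (W.X i ∩ Metric.ball x r).Nonempty := hi.2
    simp only [hzdef, dif_pos h2]
    exact h2.choose_spec
  -- candidate sets
  set Hc : List ι → Set M := fun i => {y ∈ H | dist y (z i) < r} with hHcdef
  -- each candidate set is large
  have hbig : ∀ i ∈ Moran.Zx W.X x r, (K:ℕ∞) < (Hc i).encard := by
    intro i hi
    obtain ⟨hziX, hziball⟩ := hzmem i hi
    obtain ⟨Q, hQsub, hQdisj, hQcov⟩ :=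
      exists_maximal_packing (Metric.ball (z i) ((1-2*δ)*r))
        (show (0:ℝ) < 2*(δ*r) by positivity)
    have hQbig := hpack (z i) (2*(δ*r)) ((1-2*δ)*r)
      (by positivity) (by nlinarith) (by nlinarith) Q hQsub hQdisj hQcov
    have hratio : t ≤ ((1-2*δ)*r) / (2*(δ*r)) := by
      rw [le_div_iff₀ (by positivity)]
      nlinarith [hδkey, hr.le, mul_nonneg hδpos.le hr.le]
    have hKle : (K:ℝ) ≤ c⁻¹ * (((1-2*δ)*r) / (2*(δ*r))) ^ α₂ := by
      have ht₀0 : 0 ≤ t₀ := Real.rpow_nonneg (by positivity) _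
      have h2 : t₀ ^ α₂ ≤ (((1-2*δ)*r) / (2*(δ*r))) ^ α₂ :=
        Real.rpow_le_rpow ht₀0 (le_trans (le_max_left _ _) hratio) hα₂.le
      have h3 : t₀ ^ α₂ = c * K := by
        rw [ht₀, ← Real.rpow_mul (by positivity), one_div_mul_cancel hα₂.ne',
          Real.rpow_one]
      calc (K:ℝ) = c⁻¹ * (c * K) := by field_simp
        _ = c⁻¹ * t₀ ^ α₂ := by rw [h3]
        _ ≤ _ := mul_le_mul_of_nonneg_left h2 (by positivity)
    have hQK : (K:ℕ∞) < Q.encard := by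
      have hof : ((K:ℕ∞) : ℝ≥0∞) ≤
          ENNReal.ofReal (c⁻¹ * (((1-2*δ)*r) / (2*(δ*r))) ^ α₂) := by
        rw [ENat.toENNReal_coe, ← ENNReal.ofReal_natCast K]
        exact ENNReal.ofReal_le_ofReal hKle
      exact_mod_cast lt_of_le_of_lt hof hQbig
    -- injection from Q into Hc i
    have hQy : ∀ q ∈ Q, ∃ y, y ∈ Hc i ∧ q ∈ Metric.ball y (2*(δ*r)) := by
      intro q hq
      have hqz : dist q (z i) < (1-2*δ)*r := Metric.mem_ball.mp (hQsub hq)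
      have hzx : dist (z i) x < r := Metric.mem_ball.mp hziball
      have hqx : q ∈ Metric.ball x (3*r) := by
        rw [Metric.mem_ball]
        calc dist q x ≤ dist q (z i) + dist (z i) x := dist_triangle _ _ _
          _ < 3*r := by nlinarith
      obtain ⟨y, hy, hqy⟩ := Set.mem_iUnion₂.mp (hHcov hqx)
      refine ⟨y, ⟨hy, ?_⟩, hqy⟩
      have h1 : dist y q < 2*(δ*r) := by rw [dist_comm]; exact Metric.mem_ball.mp hqy
      calc dist y (z i) ≤ dist y q + dist q (z i) := dist_triangle _ _ _
        _ < 2*(δ*r) + (1-2*δ)*r := by linarith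
        _ = r := by ring
    choose! F hF1 hF2 using hQy
    have hFinj : Set.InjOn F Q := by
      intro q hq q' hq' hFeq
      by_contra hne
      have hd := hQdisj hq hq' hne
      have h1 : F q ∈ Metric.ball q (2*(δ*r)) := by
        rw [Metric.mem_ball, dist_comm]; exact Metric.mem_ball.mp (hF2 q hq)
      have h2 : F q ∈ Metric.ball q' (2*(δ*r)) := by
        rw [Metric.mem_ball, dist_comm, hFeq]; exact Metric.mem_ball.mp (hF2 q' hq')
      exact Set.disjoint_left.mp hd h1 h2
    calc (K:ℕ∞) < Q.encard := hQK
      _ = (F '' Q).encard := (hFinj.encard_image).symm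
      _ ≤ (Hc i).encard := Set.encard_le_encard (by
          rintro y ⟨q, hq, rfl⟩; exact hF1 q hq)
  -- a system of distinct representatives
  have : Nonempty M := ⟨x⟩
  obtain ⟨f, hf, hfinj⟩ := exists_sdr Zs Hc (by
    intro i hi
    have hi' : i ∈ Moran.Zx W.X x r := hZfin.mem_toFinset.mp hi
    exact le_trans hcardZ (le_of_lt (hbig i hi')))
  refine ⟨f, ?_, ?_⟩
  · intro i hi
    have hfi := hf i (hZfin.mem_toFinset.mpr hi)
    have hz' := (hzmem i hi).1
    calc Metric.infDist (f i) (W.X i) ≤ dist (f i) (z i) :=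
          Metric.infDist_le_dist_of_mem hz'
      _ < r := hfi.2
  · intro i hi j hj hne
    have hfi := (hf i (hZfin.mem_toFinset.mpr hi)).1
    have hfj := (hf j (hZfin.mem_toFinset.mpr hj)).1
    have hne2 : f i ≠ f j := fun h =>
      hne (hfinj (Finset.mem_coe.mpr (hZfin.mem_toFinset.mpr hi))
        (Finset.mem_coe.mpr (hZfin.mem_toFinset.mpr hj)) h)
    exact hHdisj hfi hfj hne2
end
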